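/- arXiv:2402.05727 — 2 statements merged into one kernel-verified Lean document; each statement's English description precedes it below -/
import Mathlib

section
/- Let {S_i}_{i∈I} be an inverse system of spectral topological spaces over a directed partially ordered set I, with quasi-compact surjective continuous transition maps. Then the inverse limit S = lim_i S_i (with the subspace topology from the product ∏_i S_i) is a spectral space. -/
/-- A topological space is *spectral* if it is quasi-compact, T0, sober (every nonempty
irreducible closed subset has a unique generic point; with T0, `QuasiSober` gives exactly
this), and the quasi-compact open subsets are stable under finite intersections and form a
basis for the topology. -/
def IsSpectralSpace (X : Type*) [TopologicalSpace X] : Prop :=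
  CompactSpace X ∧ T0Space X ∧ QuasiSober X ∧
    (∀ U V : Set X, IsOpen U → IsCompact U → IsOpen V → IsCompact V → IsCompact (U ∩ V)) ∧
    TopologicalSpace.IsTopologicalBasis {U : Set X | IsOpen U ∧ IsCompact U}

open TopologicalSpace Set Filter Topology

section PatchAux

variable {X Y : Type*}

/-- The generating set of the patch (constructible) topology. -/
def patchGen (X : Type*) [TopologicalSpace X] : Set (Set X) :=
  {U : Set X | IsOpen U ∧ IsCompact U} ∪
    {U : Set X | ∃ V : Set X, IsOpen V ∧ IsCompact V ∧ U = Vᶜ}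

/-- The patch (constructible) topology. -/
@[reducible] def patchTop (X : Type*) [TopologicalSpace X] : TopologicalSpace X :=
  generateFrom (patchGen X)

theorem patch_isOpen [TopologicalSpace X] {U : Set X} (hU : IsOpen U) (hUc : IsCompact U) :
    IsOpen[patchTop X] U :=
  TopologicalSpace.GenerateOpen.basic _ (Or.inl ⟨hU, hUc⟩)

theorem patch_isClosed [TopologicalSpace X] {U : Set X} (hU : IsOpen U) (hUc : IsCompact U) :
    @IsClosed X (patchTop X) U := by
  have h : IsOpen[patchTop X] Uᶜ :=
    TopologicalSpace.GenerateOpen.basic _ (Or.inr ⟨U, hU, hUc, rfl⟩)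
  exact (@isOpen_compl_iff X U (patchTop X)).mp h

theorem patchTop_le [t : TopologicalSpace X]
    (hb : IsTopologicalBasis {U : Set X | IsOpen U ∧ IsCompact U}) : patchTop X ≤ t := by
  conv_rhs => rw [hb.eq_generateFrom]
  exact generateFrom_anti subset_union_left

theorem continuous_ofPatch [t : TopologicalSpace X]
    (hb : IsTopologicalBasis {U : Set X | IsOpen U ∧ IsCompact U}) :
    Continuous[patchTop X, t] id :=
  continuous_id_of_le (patchTop_le hb)

theorem continuous_patchMap [tX : TopologicalSpace X] [tY : TopologicalSpace Y] {f : X → Y}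
    (hf : Continuous f) (hqc : ∀ U : Set Y, IsOpen U → IsCompact U → IsCompact (f ⁻¹' U)) :
    Continuous[patchTop X, patchTop Y] f := by
  have : Continuous[patchTop X, generateFrom (patchGen Y)] f := by
    refine continuous_generateFrom_iff.mpr ?_
    rintro s (⟨hs, hsc⟩ | ⟨V, hV, hVc, rfl⟩)
    · exact patch_isOpen (hs.preimage hf) (hqc _ hs hsc)
    · rw [Set.preimage_compl]
      exact (patch_isClosed (hV.preimage hf) (hqc _ hV hVc)).isOpen_compl
  exact this

theorem patch_t2 [TopologicalSpace X] [T0Space X]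
    (hb : IsTopologicalBasis {U : Set X | IsOpen U ∧ IsCompact U}) :
    @T2Space X (patchTop X) := by
  refine @T2Space.mk X (patchTop X) fun x y hxy => ?_
  obtain ⟨O, hO, hxor⟩ := exists_isOpen_xor'_mem hxy
  rcases hxor with ⟨hx, hy⟩ | ⟨hy, hx⟩
  · obtain ⟨U, ⟨hU, hUc⟩, hxU, hUO⟩ := hb.exists_subset_of_mem_open hx hO
    exact ⟨U, Uᶜ, patch_isOpen hU hUc, (patch_isClosed hU hUc).isOpen_compl, hxU,
      fun h => hy (hUO h), disjoint_compl_right⟩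
  · obtain ⟨U, ⟨hU, hUc⟩, hyU, hUO⟩ := hb.exists_subset_of_mem_open hy hO
    exact ⟨Uᶜ, U, (patch_isClosed hU hUc).isOpen_compl, patch_isOpen hU hUc,
      fun h => hx (hUO h), hyU, disjoint_compl_left⟩

theorem chain_finset_lb {α : Type*} {c : Set (Set α)} (hch : IsChain (· ⊆ ·) c)
    (hne : c.Nonempty) (u : Finset c) : ∃ Z₀ ∈ c, ∀ Z ∈ u, Z₀ ⊆ (Z : Set α) := by
  classical
  induction u using Finset.induction_on with
  | empty =>
    obtain ⟨Z₀, h⟩ := hne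
    exact ⟨Z₀, h, by simp⟩
  | @insert a u ha ih =>
    obtain ⟨Z₀, hZ₀c, hZ₀⟩ := ih
    rcases eq_or_ne Z₀ (a : Set α) with heq | hne'
    · refine ⟨Z₀, hZ₀c, fun Z hZ => ?_⟩
      rcases Finset.mem_insert.mp hZ with rfl | hZu
      · exact heq.le
      · exact hZ₀ Z hZu
    · rcases hch hZ₀c a.2 hne' with h | h
      · refine ⟨Z₀, hZ₀c, fun Z hZ => ?_⟩
        rcases Finset.mem_insert.mp hZ with rfl | hZu
        · exact h
        · exact hZ₀ Z hZu
      · refine ⟨(a : Set α), a.2, fun Z hZ => ?_⟩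
        rcases Finset.mem_insert.mp hZ with rfl | hZu
        · exact Set.Subset.rfl
        · exact h.trans (hZ₀ Z hZu)

theorem patch_compactSpace [t : TopologicalSpace X] [CompactSpace X] [QuasiSober X]
    (hinter : ∀ U V : Set X, IsOpen U → IsCompact U → IsOpen V → IsCompact V → IsCompact (U ∩ V)) :
    @CompactSpace X (patchTop X) := by
  refine @CompactSpace.mk X (patchTop X) ?_
  rw [@isCompact_iff_ultrafilter_le_nhds X (patchTop X) Set.univ]
  intro F _
  let bad : Set (Set X) := {V : Set X | (IsOpen V ∧ IsCompact V) ∧ V ∉ F}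
  let C : Set X := ⋂ V : bad, (V : Set X)ᶜ
  have hCclosed : IsClosed C := isClosed_iInter fun V => V.2.1.1.isClosed_compl
  have hfin : ∀ U : Set X, U ∈ F →
      ∀ u : Finset bad, (U ∩ ⋂ V ∈ u, ((V : Set X)ᶜ)).Nonempty := by
    intro U hUF u
    rw [Set.nonempty_iff_ne_empty]
    intro hemp
    have hmem : (⋃ V ∈ (u : Set bad), (V : Set X)) ∈ F := by
      refine F.toFilter.mem_of_superset hUF ?_
      intro x hxU
      by_contra hx
      have hx' : x ∈ ⋂ V ∈ u, ((V : Set X)ᶜ) := by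
        simp only [Set.mem_iUnion, not_exists] at hx
        simp only [Set.mem_iInter, Set.mem_compl_iff]
        exact fun V hV => hx V hV
      exact absurd hemp (Set.nonempty_iff_ne_empty.mp ⟨x, hxU, hx'⟩)
    obtain ⟨V, -, hVF⟩ := (Ultrafilter.finite_biUnion_mem_iff u.finite_toSet).mp hmem
    exact V.2.2 hVF
  have hCP : ∀ U : Set X, IsOpen U → IsCompact U → U ∈ F → (C ∩ U).Nonempty := by
    intro U _ hUc hUF
    have := hUc.inter_iInter_nonempty (fun V : bad => (V : Set X)ᶜ)
      (fun V => V.2.1.1.isClosed_compl) (hfin U hUF)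
    exact this.imp fun x hx => ⟨hx.2, hx.1⟩
  let 𝒮 : Set (Set X) := {Z : Set X | IsClosed Z ∧ Z ⊆ C ∧
    ∀ U : Set X, IsOpen U → IsCompact U → U ∈ F → (Z ∩ U).Nonempty}
  have hC𝒮 : C ∈ 𝒮 := ⟨hCclosed, Set.Subset.rfl, hCP⟩
  have hchain : ∀ c ⊆ 𝒮, IsChain (· ⊆ ·) c → c.Nonempty → ∃ lb ∈ 𝒮, ∀ s ∈ c, lb ⊆ s := by
    intro c hc hch hne
    refine ⟨⋂₀ c, ⟨isClosed_sInter fun Z hZ => (hc hZ).1, ?_, ?_⟩,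
      fun s hs => Set.sInter_subset_of_mem hs⟩
    · obtain ⟨Z₀, hZ₀⟩ := hne
      exact (Set.sInter_subset_of_mem hZ₀).trans (hc hZ₀).2.1
    · intro U hU hUc hUF
      have hfin' : ∀ u : Finset c, (U ∩ ⋂ Z ∈ u, (Z : Set X)).Nonempty := by
        intro u
        obtain ⟨Z₀, hZ₀c, hZ₀⟩ := chain_finset_lb hch hne u
        obtain ⟨x, hxZ₀, hxU⟩ := (hc hZ₀c).2.2 U hU hUc hUF
        exact ⟨x, hxU, Set.mem_iInter₂.mpr fun Z hZ => hZ₀ Z hZ hxZ₀⟩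
      have := hUc.inter_iInter_nonempty (fun Z : c => (Z : Set X))
        (fun Z => (hc Z.2).1) hfin'
      rw [Set.sInter_eq_iInter]
      exact this.imp fun x hx => ⟨hx.2, hx.1⟩
  obtain ⟨m, -, hmin⟩ := zorn_superset_nonempty 𝒮 hchain C hC𝒮
  have hm𝒮 : m ∈ 𝒮 := hmin.prop
  have hmmin : ∀ Z ∈ 𝒮, Z ⊆ m → m ⊆ Z := fun Z hZ hZm => hmin.2 hZ hZm
  have hmne : m.Nonempty :=
    (hm𝒮.2.2 Set.univ isOpen_univ isCompact_univ Filter.univ_mem).mono Set.inter_subset_left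
  have hkey : ∀ O : Set X, IsOpen O → (m ∩ O).Nonempty →
      ∃ U : Set X, IsOpen U ∧ IsCompact U ∧ U ∈ F ∧ m ∩ U ⊆ O := by
    rintro O hO ⟨a, ham, haO⟩
    have hZ : m ∩ Oᶜ ∉ 𝒮 := by
      intro hmem
      exact (hmmin _ hmem Set.inter_subset_left ham).2 haO
    have hex : ¬ ∀ U : Set X, IsOpen U → IsCompact U → U ∈ F → ((m ∩ Oᶜ) ∩ U).Nonempty := by
      intro h
      exact hZ ⟨hm𝒮.1.inter hO.isClosed_compl, Set.inter_subset_left.trans hm𝒮.2.1, h⟩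
    push_neg at hex
    obtain ⟨U, hU, hUc, hUF, hemp⟩ := hex
    refine ⟨U, hU, hUc, hUF, fun x hx => ?_⟩
    by_contra hxO
    have hmem : x ∈ (m ∩ Oᶜ) ∩ U := ⟨⟨hx.1, hxO⟩, hx.2⟩
    rw [hemp] at hmem
    exact hmem
  have hmirr : IsIrreducible m := by
    refine ⟨hmne, fun O₁ O₂ hO₁ hO₂ hne₁ hne₂ => ?_⟩
    obtain ⟨U₁, hU₁, hU₁c, hU₁F, hsub₁⟩ := hkey O₁ hO₁ hne₁
    obtain ⟨U₂, hU₂, hU₂c, hU₂F, hsub₂⟩ := hkey O₂ hO₂ hne₂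
    obtain ⟨x, hxm, hxU⟩ := hm𝒮.2.2 (U₁ ∩ U₂) (hU₁.inter hU₂)
      (hinter _ _ hU₁ hU₁c hU₂ hU₂c) (Filter.inter_mem hU₁F hU₂F)
    exact ⟨x, hxm, hsub₁ ⟨hxm, hxU.1⟩, hsub₂ ⟨hxm, hxU.2⟩⟩
  obtain ⟨x, hx⟩ := QuasiSober.sober hmirr hm𝒮.1
  have hxm : x ∈ m := hx ▸ subset_closure rfl
  have hx1 : ∀ U : Set X, IsOpen U → IsCompact U → U ∈ F → x ∈ U := by
    intro U hU hUc hUF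
    obtain ⟨y, hym, hyU⟩ := hm𝒮.2.2 U hU hUc hUF
    have hy : y ∈ closure ({x} : Set X) := hx.symm ▸ hym
    obtain ⟨z, hzU, hz⟩ := mem_closure_iff.mp hy U hU hyU
    rwa [← hz]
  have hx2 : ∀ V : Set X, IsOpen V → IsCompact V → x ∈ V → V ∈ F := by
    intro V hV hVc hxV
    by_contra hVF
    have hxC : x ∈ C := hm𝒮.2.1 hxm
    exact (Set.mem_iInter.mp hxC ⟨V, ⟨hV, hVc⟩, hVF⟩) hxV
  refine ⟨x, Set.mem_univ x, ?_⟩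
  have hn : @nhds X (patchTop X) x = ⨅ s ∈ {s : Set X | x ∈ s ∧ s ∈ patchGen X}, 𝓟 s :=
    nhds_generateFrom
  rw [hn]
  refine le_iInf₂ fun s hs => ?_
  rw [Filter.le_principal_iff]
  obtain ⟨hxs, hsg⟩ := hs
  rcases hsg with ⟨hso, hsc⟩ | ⟨V, hV, hVc, rfl⟩
  · exact hx2 s hso hsc hxs
  · exact (Ultrafilter.compl_mem_iff_notMem).mpr fun hVF => hxs (hx1 V hV hVc hVF)

/-- Type synonym carrying the patch topology. -/
def PatchT (X : Type*) : Type _ := X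

@[reducible] instance (X : Type*) [TopologicalSpace X] : TopologicalSpace (PatchT X) :=
  patchTop X

/-- Identity, viewed as a map into the patch space. -/
def toPatch (X : Type*) : X → PatchT X := id

/-- Identity, viewed as a map out of the patch space. -/
def ofPatch (X : Type*) : PatchT X → X := id

theorem PatchT.compactSpace [t : TopologicalSpace X] [c : CompactSpace X] [q : QuasiSober X]
    (hinter : ∀ U V : Set X, IsOpen U → IsCompact U → IsOpen V → IsCompact V → IsCompact (U ∩ V)) :
    CompactSpace (PatchT X) := by
  exact @patch_compactSpace X t c q hinter

theorem PatchT.t2 [t : TopologicalSpace X] [t0 : T0Space X]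
    (hb : IsTopologicalBasis {U : Set X | IsOpen U ∧ IsCompact U}) :
    T2Space (PatchT X) := by
  exact @patch_t2 X t t0 hb

theorem PatchT.continuous_of [t : TopologicalSpace X]
    (hb : IsTopologicalBasis {U : Set X | IsOpen U ∧ IsCompact U}) :
    Continuous (ofPatch X) := by
  exact @continuous_ofPatch X t hb

theorem PatchT.continuous_map [tX : TopologicalSpace X] [tY : TopologicalSpace Y] {f : X → Y}
    (hf : Continuous f) (hqc : ∀ U : Set Y, IsOpen U → IsCompact U → IsCompact (f ⁻¹' U)) :
    Continuous (fun x : PatchT X => toPatch Y (f (ofPatch X x))) := by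
  exact @continuous_patchMap X Y tX tY f hf hqc

theorem PatchT.isClosed [TopologicalSpace X] {U : Set X} (hU : IsOpen U) (hUc : IsCompact U) :
    @IsClosed (PatchT X) _ U := by
  exact @patch_isClosed X _ U hU hUc

theorem qcOpen_sInter {X : Type*} [TopologicalSpace X] [CompactSpace X]
    (hinter : ∀ U V : Set X, IsOpen U → IsCompact U → IsOpen V → IsCompact V → IsCompact (U ∩ V))
    {𝒮 : Set (Set X)} (h𝒮 : 𝒮.Finite) :
    (∀ s ∈ 𝒮, IsOpen s ∧ IsCompact s) → IsOpen (⋂₀ 𝒮) ∧ IsCompact (⋂₀ 𝒮) := by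
  refine Set.Finite.induction_on
    (motive := fun 𝒯 _ => (∀ s ∈ 𝒯, IsOpen s ∧ IsCompact s) → IsOpen (⋂₀ 𝒯) ∧ IsCompact (⋂₀ 𝒯))
    𝒮 h𝒮 ?_ ?_
  · intro _
    rw [Set.sInter_empty]
    exact ⟨isOpen_univ, isCompact_univ⟩
  · intro a s _ _ ih h
    rw [Set.sInter_insert]
    have h1 := h _ (Set.mem_insert _ _)
    have h2 := ih fun u hu => h u (Set.mem_insert_of_mem _ hu)
    exact ⟨h1.1.inter h2.1, hinter _ _ h1.1 h1.2 h2.1 h2.2⟩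

end PatchAux

theorem stmt5_aux {I : Type*} [PartialOrder I] [IsDirected I (· ≤ ·)] [Nonempty I]
    (S : I → Type*) [∀ i, TopologicalSpace (S i)]
    (p : ∀ {i j : I}, j ≤ i → S i → S j)
    (hcont : ∀ (i j : I) (h : j ≤ i), Continuous (p h))
    (hspectral : ∀ i : I, IsSpectralSpace (S i))
    (hqc : ∀ (i j : I) (h : j ≤ i) (U : Set (S j)), IsOpen U → IsCompact U →
      IsCompact (p h ⁻¹' U)) :
    IsSpectralSpace {x : ∀ i, S i // ∀ (i j : I) (h : j ≤ i), p h (x i) = x j} := by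
  classical
  haveI hCS : ∀ i, CompactSpace (S i) := fun i => (hspectral i).1
  haveI hT0 : ∀ i, T0Space (S i) := fun i => (hspectral i).2.1
  haveI hQS : ∀ i, QuasiSober (S i) := fun i => (hspectral i).2.2.1
  have hInt : ∀ i, ∀ U V : Set (S i), IsOpen U → IsCompact U → IsOpen V → IsCompact V →
      IsCompact (U ∩ V) := fun i => (hspectral i).2.2.2.1
  have hBas : ∀ i, IsTopologicalBasis {U : Set (S i) | IsOpen U ∧ IsCompact U} :=
    fun i => (hspectral i).2.2.2.2
  haveI hPC : ∀ i, CompactSpace (PatchT (S i)) := fun i => PatchT.compactSpace (hInt i)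
  haveI hPT2 : ∀ i, T2Space (PatchT (S i)) := fun i => PatchT.t2 (hBas i)
  have hprc : ∀ i, Continuous
      (fun x : {x : ∀ i, S i // ∀ (i j : I) (h : j ≤ i), p h (x i) = x j} => x.1 i) :=
    fun i => (continuous_apply i).comp continuous_subtype_val
  -- the patch limit is closed in the (compact Hausdorff) patch product
  have hYclosed : IsClosed {x : ∀ i, PatchT (S i) | ∀ (i j : I) (h : j ≤ i), p h (x i) = x j} := by
    have heq : {x : ∀ i, PatchT (S i) | ∀ (i j : I) (h : j ≤ i), p h (x i) = x j}
        = ⋂ (i) (j) (h : j ≤ i), {x : ∀ i, PatchT (S i) |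
            toPatch (S j) (p h (ofPatch (S i) (x i))) = x j} := by
      ext x
      simp only [Set.mem_setOf_eq, Set.mem_iInter]
      exact Iff.rfl
    rw [heq]
    refine isClosed_iInter fun i => isClosed_iInter fun j => isClosed_iInter fun h => ?_
    have hf : Continuous (fun x : ∀ i, PatchT (S i) =>
        toPatch (S j) (p h (ofPatch (S i) (x i)))) := by
      exact (PatchT.continuous_map (hcont i j h) (hqc i j h)).comp (continuous_apply i)
    have hg : Continuous (fun x : ∀ i, PatchT (S i) => x j) := continuous_apply j
    exact isClosed_eq hf hg
  haveI hYcpt :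
      CompactSpace {x : ∀ i, PatchT (S i) // ∀ (i j : I) (h : j ≤ i), p h (x i) = x j} :=
    isCompact_iff_compactSpace.mp hYclosed.isCompact
  -- quasi-compactness of the basic open sets of the limit
  have hφcont : Continuous
      (fun y : {x : ∀ i, PatchT (S i) // ∀ (i j : I) (h : j ≤ i), p h (x i) = x j} =>
        (⟨fun i => ofPatch (S i) (y.1 i), fun i j h => y.2 i j h⟩ :
          {x : ∀ i, S i // ∀ (i j : I) (h : j ≤ i), p h (x i) = x j})) := by
    refine Continuous.subtype_mk ?_ _
    refine continuous_pi fun k => ?_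
    exact (PatchT.continuous_of (hBas k)).comp
      ((continuous_apply k).comp continuous_subtype_val)
  have hkey : ∀ (i : I) (U : Set (S i)), IsOpen U → IsCompact U →
      IsCompact {x : {x : ∀ i, S i // ∀ (i j : I) (h : j ≤ i), p h (x i) = x j} | x.1 i ∈ U} := by
    intro i U hU hUc
    have h1 : IsClosed {y : {x : ∀ i, PatchT (S i) // ∀ (i j : I) (h : j ≤ i), p h (x i) = x j} |
        y.1 i ∈ U} :=
      (PatchT.isClosed hU hUc).preimage ((continuous_apply i).comp continuous_subtype_val)
    have h2 := (h1.isCompact).image hφcont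
    have h3 : (fun y : {x : ∀ i, PatchT (S i) // ∀ (i j : I) (h : j ≤ i), p h (x i) = x j} =>
          (⟨fun i => ofPatch (S i) (y.1 i), fun i j h => y.2 i j h⟩ :
            {x : ∀ i, S i // ∀ (i j : I) (h : j ≤ i), p h (x i) = x j})) ''
          {y | y.1 i ∈ U}
        = {x : {x : ∀ i, S i // ∀ (i j : I) (h : j ≤ i), p h (x i) = x j} | x.1 i ∈ U} := by
      ext x
      constructor
      · rintro ⟨y, hy, rfl⟩
        exact hy
      · intro hx
        exact ⟨⟨x.1, x.2⟩, hx, rfl⟩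
    rwa [h3] at h2
  -- compactness of the limit
  haveI hXcs : CompactSpace {x : ∀ i, S i // ∀ (i j : I) (h : j ≤ i), p h (x i) = x j} := by
    obtain ⟨i0⟩ := ‹Nonempty I›
    refine ⟨?_⟩
    have h := hkey i0 Set.univ isOpen_univ isCompact_univ
    have he : {x : {x : ∀ i, S i // ∀ (i j : I) (h : j ≤ i), p h (x i) = x j} |
        x.1 i0 ∈ Set.univ} = Set.univ := Set.eq_univ_of_forall fun x => Set.mem_univ _
    rw [he] at h
    exact h
  -- the standard basis of the limit
  have hbasis : IsTopologicalBasis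
      {O : Set {x : ∀ i, S i // ∀ (i j : I) (h : j ≤ i), p h (x i) = x j} |
        ∃ (i : I) (U : Set (S i)), IsOpen U ∧ IsCompact U ∧ O = {x | x.1 i ∈ U}} := by
    refine isTopologicalBasis_of_isOpen_of_nhds ?_ ?_
    · rintro O ⟨i, U, hU, _, rfl⟩
      exact hU.preimage (hprc i)
    · intro a u hau hu
      obtain ⟨w, hw, rfl⟩ := IsInducing.subtypeVal.isOpen_iff.mp hu
      obtain ⟨t, v, hv, hsub⟩ := isOpen_pi_iff.mp hw a.1 hau
      obtain ⟨k, hk⟩ := t.exists_le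
      have hVs : ∀ i ∈ t, ∃ V : Set (S i), (IsOpen V ∧ IsCompact V) ∧ a.1 i ∈ V ∧ V ⊆ v i :=
        fun i hi => (hBas i).exists_subset_of_mem_open (hv i hi).2 (hv i hi).1
      choose V hV1 hV2 hV3 using hVs
      have hWoc : IsOpen (⋂ i : {i // i ∈ t}, p (hk i.1 i.2) ⁻¹' V i.1 i.2) ∧
          IsCompact (⋂ i : {i // i ∈ t}, p (hk i.1 i.2) ⁻¹' V i.1 i.2) := by
        have hro : (⋂ i : {i // i ∈ t}, p (hk i.1 i.2) ⁻¹' V i.1 i.2)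
            = ⋂₀ (Set.range fun i : {i // i ∈ t} => p (hk i.1 i.2) ⁻¹' V i.1 i.2) := by
          rw [Set.sInter_range]
        rw [hro]
        refine qcOpen_sInter (hInt k) (Set.finite_range _) ?_
        rintro s ⟨i, rfl⟩
        exact ⟨(hV1 i.1 i.2).1.preimage (hcont k i.1 (hk i.1 i.2)),
          hqc k i.1 (hk i.1 i.2) _ (hV1 i.1 i.2).1 (hV1 i.1 i.2).2⟩
      refine ⟨{x | x.1 k ∈ ⋂ i : {i // i ∈ t}, p (hk i.1 i.2) ⁻¹' V i.1 i.2},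
        ⟨k, _, hWoc.1, hWoc.2, rfl⟩, ?_, ?_⟩
      · refine Set.mem_iInter.mpr fun i => ?_
        show p (hk i.1 i.2) (a.1 k) ∈ V i.1 i.2
        rw [a.2 k i.1 (hk i.1 i.2)]
        exact hV2 i.1 i.2
      · intro x hx
        refine hsub ?_
        refine Set.mem_pi.mpr fun i hi => ?_
        have hxi : p (hk i hi) (x.1 k) ∈ V i hi := Set.mem_iInter.mp hx ⟨i, hi⟩
        rw [x.2 k i (hk i hi)] at hxi
        exact hV3 i hi hxi
  -- every quasi-compact open is a finite union of basic opens
  have hfinrep : ∀ W : Set {x : ∀ i, S i // ∀ (i j : I) (h : j ≤ i), p h (x i) = x j},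
      IsOpen W → IsCompact W →
      ∃ 𝒯 : Set (Set {x : ∀ i, S i // ∀ (i j : I) (h : j ≤ i), p h (x i) = x j}),
        𝒯.Finite ∧ (∀ O ∈ 𝒯, ∃ (i : I) (U : Set (S i)),
          IsOpen U ∧ IsCompact U ∧ O = {x | x.1 i ∈ U}) ∧ W = ⋃₀ 𝒯 := by
    intro W hW hWc
    obtain ⟨𝒯₀, h𝒯₀B, h𝒯₀⟩ := hbasis.open_eq_sUnion hW
    have hcover : W ⊆ ⋃ O : 𝒯₀, (O : Set _) := by
      rw [← Set.sUnion_eq_iUnion, ← h𝒯₀]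
    obtain ⟨u, hu⟩ := hWc.elim_finite_subcover (fun O : 𝒯₀ => (O : Set _))
      (fun O => (hbasis.isOpen (h𝒯₀B O.2))) hcover
    refine ⟨Subtype.val '' (u : Set 𝒯₀), (u.finite_toSet).image _,
      fun O hO => ?_, ?_⟩
    · obtain ⟨O', _, rfl⟩ := hO
      exact h𝒯₀B O'.2
    · apply Set.Subset.antisymm
      · intro x hx
        obtain ⟨O, hOu, hxO⟩ := Set.mem_iUnion₂.mp (hu hx)
        exact ⟨O, ⟨O, hOu, rfl⟩, hxO⟩
      · intro x hx
        obtain ⟨O, ⟨O', _, rfl⟩, hxO⟩ := hx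
        rw [h𝒯₀]
        exact ⟨O', O'.2, hxO⟩
  -- intersection of two basic opens is basic
  have hinterB : ∀ O₁ O₂ : Set {x : ∀ i, S i // ∀ (i j : I) (h : j ≤ i), p h (x i) = x j},
      (∃ (i : I) (U : Set (S i)), IsOpen U ∧ IsCompact U ∧ O₁ = {x | x.1 i ∈ U}) →
      (∃ (i : I) (U : Set (S i)), IsOpen U ∧ IsCompact U ∧ O₂ = {x | x.1 i ∈ U}) →
      ∃ (i : I) (U : Set (S i)), IsOpen U ∧ IsCompact U ∧ O₁ ∩ O₂ = {x | x.1 i ∈ U} := by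
    rintro _ _ ⟨i, U, hU, hUc, rfl⟩ ⟨j, V, hV, hVc, rfl⟩
    obtain ⟨k, hki, hkj⟩ := directed_of (· ≤ ·) i j
    refine ⟨k, p hki ⁻¹' U ∩ p hkj ⁻¹' V,
      (hU.preimage (hcont k i hki)).inter (hV.preimage (hcont k j hkj)),
      hInt k _ _ (hU.preimage (hcont k i hki)) (hqc k i hki U hU hUc)
        (hV.preimage (hcont k j hkj)) (hqc k j hkj V hV hVc), ?_⟩
    ext x
    simp only [Set.mem_inter_iff, Set.mem_setOf_eq, Set.mem_preimage,
      x.2 k i hki, x.2 k j hkj]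
  -- stability of quasi-compact opens under intersection
  have hqcInter : ∀ U V : Set {x : ∀ i, S i // ∀ (i j : I) (h : j ≤ i), p h (x i) = x j},
      IsOpen U → IsCompact U → IsOpen V → IsCompact V → IsCompact (U ∩ V) := by
    intro U V hU hUc hV hVc
    obtain ⟨𝒯, h𝒯f, h𝒯B, rfl⟩ := hfinrep U hU hUc
    obtain ⟨𝒯', h𝒯'f, h𝒯'B, rfl⟩ := hfinrep V hV hVc
    have hre : ⋃₀ 𝒯 ∩ ⋃₀ 𝒯' = ⋃ O ∈ 𝒯, ⋃ O' ∈ 𝒯', O ∩ O' := by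
      ext x
      constructor
      · rintro ⟨⟨O, hO, hxO⟩, ⟨O', hO', hxO'⟩⟩
        exact Set.mem_iUnion₂.mpr ⟨O, hO, Set.mem_iUnion₂.mpr ⟨O', hO', hxO, hxO'⟩⟩
      · intro hx
        obtain ⟨O, hO, hx⟩ := Set.mem_iUnion₂.mp hx
        obtain ⟨O', hO', hxO, hxO'⟩ := Set.mem_iUnion₂.mp hx
        exact ⟨⟨O, hO, hxO⟩, ⟨O', hO', hxO'⟩⟩
    rw [hre]
    refine h𝒯f.isCompact_biUnion fun O hO => h𝒯'f.isCompact_biUnion fun O' hO' => ?_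
    obtain ⟨i, U', hU', hU'c, heq⟩ := hinterB O O' (h𝒯B O hO) (h𝒯'B O' hO')
    rw [heq]
    exact hkey i U' hU' hU'c
  -- the quasi-compact opens form a basis
  have hbasis2 : IsTopologicalBasis
      {U : Set {x : ∀ i, S i // ∀ (i j : I) (h : j ≤ i), p h (x i) = x j} |
        IsOpen U ∧ IsCompact U} := by
    refine isTopologicalBasis_of_isOpen_of_nhds (fun u hu => hu.1) ?_
    intro a u hau hu
    obtain ⟨b, hbB, hab, hbu⟩ := hbasis.exists_subset_of_mem_open hau hu
    obtain ⟨i, U, hU, hUc, rfl⟩ := hbB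
    exact ⟨_, ⟨hU.preimage (hprc i), hkey i U hU hUc⟩, hab, hbu⟩
  -- sobriety
  have hsober : QuasiSober {x : ∀ i, S i // ∀ (i j : I) (h : j ≤ i), p h (x i) = x j} := by
    constructor
    intro T hT hTc
    have hgex : ∀ i, ∃ y : S i, IsGenericPoint y
        (closure ((fun x : {x : ∀ i, S i // ∀ (i j : I) (h : j ≤ i), p h (x i) = x j} =>
          x.1 i) '' T)) :=
      fun i => (hQS i).sober ((hT.image _ (hprc i).continuousOn).closure) isClosed_closure
    choose g hg using hgex
    have hgd : ∀ i, closure ({g i} : Set (S i)) =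
        closure ((fun x : {x : ∀ i, S i // ∀ (i j : I) (h : j ≤ i), p h (x i) = x j} =>
          x.1 i) '' T) := fun i => (hg i)
    have hcompat : ∀ (i j : I) (h : j ≤ i), p h (g i) = g j := by
      intro i j h
      have h1 : closure ({p h (g i)} : Set (S j)) =
          closure ((fun x : {x : ∀ i, S i // ∀ (i j : I) (h : j ≤ i), p h (x i) = x j} =>
            x.1 j) '' T) := by
        calc closure ({p h (g i)} : Set (S j))
            = closure (p h '' {g i}) := by rw [Set.image_singleton]
          _ = closure (p h '' closure {g i}) := (closure_image_closure (hcont i j h)).symm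
          _ = closure (p h '' closure ((fun x : {x : ∀ i, S i //
                ∀ (i j : I) (h : j ≤ i), p h (x i) = x j} => x.1 i) '' T)) := by rw [hgd i]
          _ = closure (p h '' ((fun x : {x : ∀ i, S i //
                ∀ (i j : I) (h : j ≤ i), p h (x i) = x j} => x.1 i) '' T)) :=
              closure_image_closure (hcont i j h)
          _ = closure ((fun x : {x : ∀ i, S i //
                ∀ (i j : I) (h : j ≤ i), p h (x i) = x j} => x.1 j) '' T) := by
              rw [Set.image_image]
              exact congrArg closure (Set.image_congr fun x hx => x.2 i j h)
      have h2 : closure ({p h (g i)} : Set (S j)) = closure ({g j} : Set (S j)) :=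
        h1.trans (hgd j).symm
      exact (inseparable_iff_closure_eq.mpr h2).eq
    have hxT : (⟨g, fun i j h => hcompat i j h⟩ :
        {x : ∀ i, S i // ∀ (i j : I) (h : j ≤ i), p h (x i) = x j}) ∈ T := by
      rw [← hTc.closure_eq, hbasis.mem_closure_iff]
      rintro O ⟨i, U, hU, _, rfl⟩ hxO
      have hgi : g i ∈ closure ((fun x : {x : ∀ i, S i //
          ∀ (i j : I) (h : j ≤ i), p h (x i) = x j} => x.1 i) '' T) :=
        (hgd i) ▸ subset_closure rfl
      obtain ⟨y, hyU, ⟨z, hzT, hzy⟩⟩ := mem_closure_iff.mp hgi U hU hxO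
      refine ⟨z, ?_, hzT⟩
      show z.1 i ∈ U
      have hzy' : z.1 i = y := hzy
      rw [hzy']
      exact hyU
    refine ⟨⟨g, fun i j h => hcompat i j h⟩, ?_⟩
    refine Set.Subset.antisymm (hTc.closure_subset_iff.mpr (Set.singleton_subset_iff.mpr hxT)) ?_
    intro z hz
    rw [hbasis.mem_closure_iff]
    rintro O ⟨i, U, hU, _, rfl⟩ hzO
    have hzi : z.1 i ∈ closure ({g i} : Set (S i)) := by
      rw [hgd i]
      exact subset_closure ⟨z, hz, rfl⟩
    obtain ⟨y, hyU, hy⟩ := mem_closure_iff.mp hzi U hU hzO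
    refine ⟨⟨g, fun i j h => hcompat i j h⟩, ?_, rfl⟩
    show g i ∈ U
    rw [← show y = g i from hy]
    exact hyU
  exact ⟨hXcs, inferInstance, hsober, hqcInter, hbasis2⟩

/-- Let `{S i}` be an inverse system of spectral spaces over a directed
partially ordered set `I`, with quasi-compact surjective continuous transition maps
`p : S i → S j` (for `j ≤ i`).  Then the inverse limit `S = lim_i S i`, topologized as a
subspace of the product `∀ i, S i`, is a spectral space. -/
theorem stmt_5 {I : Type*} [PartialOrder I] [IsDirected I (· ≤ ·)]
    (S : I → Type*) [∀ i, TopologicalSpace (S i)]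
    (p : ∀ {i j : I}, j ≤ i → S i → S j)
    (hp_id : ∀ (i : I) (x : S i), p (le_refl i) x = x)
    (hp_comp : ∀ {i j k : I} (hij : j ≤ i) (hjk : k ≤ j) (x : S i),
      p hjk (p hij x) = p (hjk.trans hij) x)
    (hcont : ∀ (i j : I) (h : j ≤ i), Continuous (p h))
    (hspectral : ∀ i : I, IsSpectralSpace (S i))
    (hqc : ∀ (i j : I) (h : j ≤ i) (U : Set (S j)), IsOpen U → IsCompact U →
      IsCompact (p h ⁻¹' U))
    (hsurj : ∀ (i j : I) (h : j ≤ i), Function.Surjective (p h)) :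
    IsSpectralSpace {x : ∀ i, S i // ∀ (i j : I) (h : j ≤ i), p h (x i) = x j} := by
  rcases isEmpty_or_nonempty I with hI | hI
  · haveI hsub : Subsingleton {x : ∀ i, S i // ∀ (i j : I) (h : j ≤ i), p h (x i) = x j} :=
      ⟨fun a b => Subtype.ext (funext fun i => isEmptyElim i)⟩
    haveI : Finite {x : ∀ i, S i // ∀ (i j : I) (h : j ≤ i), p h (x i) = x j} :=
      Finite.of_subsingleton
    haveI hT0 : ∀ i, T0Space (S i) := fun i => (hspectral i).2.1
    refine ⟨inferInstance, inferInstance, ?_, ?_, ?_⟩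
    · constructor
      intro s hs hsc
      obtain ⟨a, ha⟩ := hs.1
      refine ⟨a, Set.Subset.antisymm
        (hsc.closure_subset_iff.mpr (Set.singleton_subset_iff.mpr ha)) ?_⟩
      intro y hy
      have : y = a := Subsingleton.elim y a
      rw [this]
      exact subset_closure rfl
    · intro U V _ _ _ _
      exact (Set.toFinite _).isCompact
    · have hall : {U : Set {x : ∀ i, S i // ∀ (i j : I) (h : j ≤ i), p h (x i) = x j} |
          IsOpen U ∧ IsCompact U} = {U | IsOpen U} := by
        ext U
        simp only [Set.mem_setOf_eq, and_iff_left_iff_imp]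
        intro _
        exact (Set.toFinite _).isCompact
      rw [hall]
      exact TopologicalSpace.isTopologicalBasis_opens
  · exact stmt5_aux S @p hcont hspectral hqc
end

section
/- Let {S_i}_{i∈I} be an inverse system of spectral spaces over a directed partially ordered set I, with quasi-compact surjective transition maps p_{ij}, and let S = lim_i S_i. Then the natural continuous map π₀(S) → lim_i π₀(S_i), whose i-th component is induced by the projection pr_i: S → S_i (the target being the inverse limit of the spaces π₀(S_i) along the maps induced by the p_{ij}, topologized as a subspace of the product), is a homeomorphism. -/
open Set Filter TopologicalSpace Topology

section Patch

variable {Y : Type*} [TopologicalSpace Y]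

/-- `z` is a limit of the ultrafilter `F` in the patch (constructible) topology. -/
def PatchLim (F : Ultrafilter Y) (z : Y) : Prop :=
  ∀ U : Set Y, IsOpen U → IsCompact U → (z ∈ U ↔ U ∈ F)

/-- `K` is closed under patch limits of ultrafilters (i.e. patch-closed). -/
def UPC (K : Set Y) : Prop :=
  ∀ (F : Ultrafilter Y) (z : Y), K ∈ F → PatchLim F z → z ∈ K

theorem patchLim_le_nhds (hS : IsSpectralSpace Y) {F : Ultrafilter Y} {z : Y}
    (h : PatchLim F z) : (F : Filter Y) ≤ 𝓝 z := by
  intro s hs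
  obtain ⟨t, ⟨hto, htc⟩, hzt, hts⟩ := hS.2.2.2.2.mem_nhds_iff.1 hs
  exact Filter.mem_of_superset ((h t hto htc).1 hzt) hts

theorem eq_of_same_qcopens (hS : IsSpectralSpace Y) {z z' : Y}
    (h : ∀ U : Set Y, IsOpen U → IsCompact U → (z ∈ U ↔ z' ∈ U)) : z = z' := by
  haveI := hS.2.1
  refine Inseparable.eq ?_
  rw [inseparable_iff_forall_isOpen]
  intro U hU
  constructor
  · intro hz
    obtain ⟨t, ⟨hto, htc⟩, hzt, hts⟩ := hS.2.2.2.2.mem_nhds_iff.1 (hU.mem_nhds hz)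
    exact hts ((h t hto htc).1 hzt)
  · intro hz
    obtain ⟨t, ⟨hto, htc⟩, hzt, hts⟩ := hS.2.2.2.2.mem_nhds_iff.1 (hU.mem_nhds hz)
    exact hts ((h t hto htc).2 hzt)

theorem patchLim_unique (hS : IsSpectralSpace Y) {F : Ultrafilter Y} {z z' : Y}
    (h : PatchLim F z) (h' : PatchLim F z') : z = z' :=
  eq_of_same_qcopens hS fun U hUo hUc => (h U hUo hUc).trans (h' U hUo hUc).symm

theorem exists_patchLim (hS : IsSpectralSpace Y) (F : Ultrafilter Y) : ∃ z, PatchLim F z := by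
  classical
  haveI := hS.1
  set C : Set Y := {y | ∀ U : Set Y, IsOpen U → IsCompact U → U ∉ F → y ∉ U} with hC
  have hCclosed : IsClosed C := by
    have : C = ⋂ U : {U : Set Y // IsOpen U ∧ IsCompact U ∧ U ∉ F}, (U : Set Y)ᶜ := by
      ext y
      simp only [hC, mem_setOf_eq, mem_iInter, Subtype.forall, mem_compl_iff]
      exact ⟨fun h U hU => h U hU.1 hU.2.1 hU.2.2, fun h U h1 h2 h3 => h U ⟨h1, h2, h3⟩⟩
    rw [this]
    exact isClosed_iInter fun U => U.2.1.isClosed_compl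
  have hhelp : ∀ W : Set Y, IsCompact W → W ∈ F → (W ∩ C).Nonempty := by
    intro W hWc hWF
    by_contra h
    rw [Set.not_nonempty_iff_eq_empty] at h
    have hcov : ∀ w ∈ W, ∃ V : Set Y, IsOpen V ∧ IsCompact V ∧ V ∉ F ∧ w ∈ V := by
      intro w hw
      have hwC : w ∉ C := fun hwC => (Set.eq_empty_iff_forall_notMem.1 h w) ⟨hw, hwC⟩
      simp only [hC, mem_setOf_eq, not_forall] at hwC
      obtain ⟨V, hVo, hVc, hVF, hwV⟩ := hwC
      exact ⟨V, hVo, hVc, hVF, not_not.1 hwV⟩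
    choose V hVo hVc hVF hwV using hcov
    obtain ⟨t, ht⟩ := hWc.elim_finite_subcover (fun w : W => V w w.2)
      (fun w => hVo w w.2) (fun w hw => mem_iUnion.2 ⟨⟨w, hw⟩, hwV w hw⟩)
    have hUnion : (⋃ w ∈ (t : Set W), V w w.2) ∈ F :=
      Filter.mem_of_superset hWF (by simpa using ht)
    obtain ⟨w, _, hwF⟩ := (Ultrafilter.finite_biUnion_mem_iff t.finite_toSet).1 hUnion
    exact hVF w w.2 hwF
  obtain ⟨x, hx⟩ := exists_clusterPt_of_compactSpace (F : Filter Y)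
  have hxC : x ∈ C := by
    intro U hUo hUc hUF hxU
    have hUc' : Uᶜ ∈ F := Ultrafilter.compl_mem_iff_notMem.2 hUF
    have : x ∈ closure Uᶜ :=
      mem_closure_iff_clusterPt.2 (hx.mono (le_principal_iff.2 hUc'))
    rw [hUo.isClosed_compl.closure_eq] at this
    exact this hxU
  have hCirr : IsIrreducible C := by
    refine ⟨⟨x, hxC⟩, ?_⟩
    rintro u v hu hv ⟨a, haC, hau⟩ ⟨b, hbC, hbv⟩
    obtain ⟨t1, ⟨ht1o, ht1c⟩, hat1, ht1u⟩ := hS.2.2.2.2.mem_nhds_iff.1 (hu.mem_nhds hau)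
    obtain ⟨t2, ⟨ht2o, ht2c⟩, hbt2, ht2v⟩ := hS.2.2.2.2.mem_nhds_iff.1 (hv.mem_nhds hbv)
    have ht1F : t1 ∈ F := by
      by_contra hF; exact (haC t1 ht1o ht1c hF) hat1
    have ht2F : t2 ∈ F := by
      by_contra hF; exact (hbC t2 ht2o ht2c hF) hbt2
    have hWc : IsCompact (t1 ∩ t2) := hS.2.2.2.1 _ _ ht1o ht1c ht2o ht2c
    obtain ⟨w, hwW, hwC⟩ := hhelp _ hWc (Filter.inter_mem ht1F ht2F)
    exact ⟨w, hwC, ht1u hwW.1, ht2v hwW.2⟩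
  obtain ⟨z, hz⟩ := hS.2.2.1.sober hCirr hCclosed
  have hzgen : closure ({z} : Set Y) = C := hz
  refine ⟨z, fun U hUo hUc => ⟨?_, ?_⟩⟩
  · intro hzU
    have hzC : z ∈ C := by
      rw [← hzgen]; exact subset_closure rfl
    by_contra hUF
    exact hzC U hUo hUc hUF hzU
  · intro hUF
    by_contra hzU
    have hCU : C ∩ U = ∅ := by
      rw [Set.eq_empty_iff_forall_notMem]
      rintro y ⟨hyC, hyU⟩
      rw [← hzgen] at hyC
      obtain ⟨w, hwU, (hwz : w = z)⟩ := mem_closure_iff.1 hyC U hUo hyU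
      exact hzU (hwz ▸ hwU)
    obtain ⟨w, hwU, hwC⟩ := hhelp U hUc hUF
    exact (Set.eq_empty_iff_forall_notMem.1 hCU) w ⟨hwC, hwU⟩

end Patch

section Patch2

variable {Y : Type*} [TopologicalSpace Y]

theorem upc_qcopen {U : Set Y} (hUo : IsOpen U) (hUc : IsCompact U) : UPC U :=
  fun F z hUF hlim => (hlim U hUo hUc).2 hUF

theorem IsClosed.upc (hS : IsSpectralSpace Y) {K : Set Y} (hK : IsClosed K) : UPC K :=
  fun F z hKF hlim =>
    hK.closure_eq ▸ mem_closure_iff_ultrafilter.2 ⟨F, hKF, patchLim_le_nhds hS hlim⟩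

theorem upc_iInter {ι : Sort*} {K : ι → Set Y} (h : ∀ i, UPC (K i)) : UPC (⋂ i, K i) :=
  fun F z hF hlim => Set.mem_iInter.2 fun i =>
    h i F z (Filter.mem_of_superset hF (Set.iInter_subset _ i)) hlim

theorem upc_inter {K L : Set Y} (hK : UPC K) (hL : UPC L) : UPC (K ∩ L) :=
  fun F z h hlim =>
    ⟨hK F z (Filter.mem_of_superset h Set.inter_subset_left) hlim,
     hL F z (Filter.mem_of_superset h Set.inter_subset_right) hlim⟩

/-- Nonempty directed intersections of nonempty patch-closed sets. -/
theorem nonempty_iInter_upc (hS : IsSpectralSpace Y) {ι : Sort*} [Nonempty ι] {K : ι → Set Y}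
    (hupc : ∀ i, UPC (K i)) (hne : ∀ i, (K i).Nonempty)
    (hdir : Directed (fun A B : Set Y => B ⊆ A) K) : (⋂ i, K i).Nonempty := by
  have hdir' : Directed (· ≥ ·) (fun i => Filter.principal (K i)) := by
    intro i j
    obtain ⟨k, hk1, hk2⟩ := hdir i j
    exact ⟨k, le_principal_iff.2 (Filter.mem_of_superset (mem_principal_self _) hk1),
           le_principal_iff.2 (Filter.mem_of_superset (mem_principal_self _) hk2)⟩
  haveI : (⨅ i, Filter.principal (K i)).NeBot :=
    Filter.iInf_neBot_of_directed' hdir' fun i => Filter.principal_neBot_iff.2 (hne i)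
  obtain ⟨F, hF⟩ := Ultrafilter.exists_le (⨅ i, Filter.principal (K i))
  obtain ⟨z, hz⟩ := exists_patchLim hS F
  exact ⟨z, Set.mem_iInter.2 fun i =>
    hupc i F z (le_principal_iff.1 (hF.trans (iInf_le _ i))) hz⟩

variable {Z : Type*} [TopologicalSpace Z] {f : Y → Z}

theorem patchLim_map (hf : Continuous f)
    (hfqc : ∀ U : Set Z, IsOpen U → IsCompact U → IsCompact (f ⁻¹' U))
    {F : Ultrafilter Y} {z : Y} (h : PatchLim F z) : PatchLim (F.map f) (f z) := by
  intro U hUo hUc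
  rw [Ultrafilter.mem_map]
  exact h _ (hUo.preimage hf) (hfqc U hUo hUc)

theorem upc_image (hSY : IsSpectralSpace Y) (hSZ : IsSpectralSpace Z) (hf : Continuous f)
    (hfqc : ∀ U : Set Z, IsOpen U → IsCompact U → IsCompact (f ⁻¹' U))
    {K : Set Y} (hK : UPC K) : UPC (f '' K) := by
  classical
  rcases K.eq_empty_or_nonempty with rfl | ⟨k₀, hk₀⟩
  · intro F z h _
    simp only [Set.image_empty] at h
    exact absurd h (Filter.empty_notMem (F : Filter Z))
  intro F w hKF hlim
  have hg : ∀ y : Z, ∃ u : Y, u ∈ K ∧ (y ∈ f '' K → f u = y) := by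
    intro y
    by_cases hy : y ∈ f '' K
    · obtain ⟨u, hu, rfl⟩ := hy
      exact ⟨u, hu, fun _ => rfl⟩
    · exact ⟨k₀, hk₀, fun h => absurd h hy⟩
  choose g hgK hgf using hg
  obtain ⟨z, hz⟩ := exists_patchLim hSY (F.map g)
  have hzK : z ∈ K := hK _ z (by
    rw [Ultrafilter.mem_map]
    exact Filter.mem_of_superset Filter.univ_mem (fun y _ => hgK y)) hz
  have hmapeq : (F.map g).map f = F := by
    apply Ultrafilter.coe_injective
    apply Filter.ext
    intro A
    have key : (f ∘ g) ⁻¹' A ∩ (f '' K) = A ∩ (f '' K) := by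
      ext y
      constructor
      · rintro ⟨hy1, hy2⟩
        refine ⟨?_, hy2⟩
        rwa [Set.mem_preimage, Function.comp_apply, hgf y hy2] at hy1
      · rintro ⟨hy1, hy2⟩
        refine ⟨?_, hy2⟩
        rw [Set.mem_preimage, Function.comp_apply, hgf y hy2]
        exact hy1
    constructor
    · intro hA
      rw [Ultrafilter.mem_coe, Ultrafilter.mem_map, Ultrafilter.mem_map, ← Set.preimage_comp] at hA
      have : (f ∘ g) ⁻¹' A ∩ (f '' K) ∈ F := Filter.inter_mem hA hKF
      rw [key] at this
      exact Filter.mem_of_superset this Set.inter_subset_left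
    · intro hA
      rw [Ultrafilter.mem_coe, Ultrafilter.mem_map, Ultrafilter.mem_map, ← Set.preimage_comp]
      have : A ∩ (f '' K) ∈ F := Filter.inter_mem hA hKF
      rw [← key] at this
      exact Filter.mem_of_superset this Set.inter_subset_left
  have hfz : PatchLim F (f z) := by
    rw [← hmapeq]
    exact patchLim_map hf hfqc hz
  have : w = f z := patchLim_unique hSZ hlim hfz
  exact this ▸ Set.mem_image_of_mem f hzK

theorem patchLim_const {F : Ultrafilter Z} {s w : Z} (hSZ : IsSpectralSpace Z)
    (hs : {s} ∈ F) (hw : PatchLim F w) : w = s := by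
  apply eq_of_same_qcopens hSZ
  intro U hUo hUc
  rw [hw U hUo hUc]
  constructor
  · intro hU
    by_contra hsU
    have : Uᶜ ∈ F := Filter.mem_of_superset hs (by simpa using hsU)
    exact (Ultrafilter.compl_mem_iff_notMem.1 this) hU
  · intro hsU
    exact Filter.mem_of_superset hs (by simpa using hsU)

theorem upc_fiber (hSZ : IsSpectralSpace Z) (hf : Continuous f)
    (hfqc : ∀ U : Set Z, IsOpen U → IsCompact U → IsCompact (f ⁻¹' U)) (s : Z) :
    UPC (f ⁻¹' {s}) := by
  intro F z hF hlim
  have h1 : PatchLim (F.map f) (f z) := patchLim_map hf hfqc hlim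
  have h2 : {s} ∈ F.map f := hF
  exact patchLim_const hSZ h2 h1

end Patch2

section KeyLemma

variable {Y : Type*} [TopologicalSpace Y]

theorem spectral_aux (hS : IsSpectralSpace Y) (x : Y) {A B : Set Y}
    (hA : IsClosed A) (hB : IsClosed B) (hdisj : A ∩ B = ∅)
    (hunion : A ∪ B = ⋂₀ {U : Set Y | IsClopen U ∧ x ∈ U}) (hxA : x ∈ A) : B = ∅ := by
  classical
  haveI := hS.1
  set Z := ⋂₀ {U : Set Y | IsClopen U ∧ x ∈ U} with hZ
  -- Build a quasi-compact open E with A ⊆ E and E ∩ B = ∅.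
  have hAc : IsCompact A := hA.isCompact
  have hcov : ∀ a : A, ∃ V : Set Y, (IsOpen V ∧ IsCompact V) ∧ (a : Y) ∈ V ∧ V ⊆ Bᶜ := by
    rintro ⟨a, ha⟩
    have haB : a ∈ Bᶜ := fun hab => (Set.eq_empty_iff_forall_notMem.1 hdisj a) ⟨ha, hab⟩
    obtain ⟨t, ht, hat, hts⟩ := hS.2.2.2.2.mem_nhds_iff.1 (hB.isOpen_compl.mem_nhds haB)
    exact ⟨t, ht, hat, hts⟩
  choose V hV hmemV hsubV using hcov
  obtain ⟨s, hs⟩ := hAc.elim_finite_subcover (fun a : A => V a) (fun a => (hV a).1)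
    (fun a ha => Set.mem_iUnion.2 ⟨⟨a, ha⟩, hmemV ⟨a, ha⟩⟩)
  set E := ⋃ a ∈ (s : Set A), V a with hE
  have hEo : IsOpen E := isOpen_biUnion fun a _ => (hV a).1
  have hEc : IsCompact E := s.finite_toSet.isCompact_biUnion fun a _ => (hV a).2
  have hAE : A ⊆ E := by
    intro a ha
    have := hs ha
    simpa [hE] using this
  have hEB : E ∩ B = ∅ := by
    rw [Set.eq_empty_iff_forall_notMem]
    rintro b ⟨hbE, hbB⟩
    simp only [hE, Set.mem_iUnion] at hbE
    obtain ⟨a, _, hba⟩ := hbE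
    exact hsubV a hba hbB
  -- The set of points whose closure meets both E and Eᶜ.
  set Q := {e : Y | (closure {e} ∩ E).Nonempty ∧ (closure {e} ∩ Eᶜ).Nonempty} with hQdef
  have hQZ : Q ∩ Z = ∅ := by
    rw [Set.eq_empty_iff_forall_notMem]
    rintro e ⟨heQ, heZ⟩
    have heAB : e ∈ A ∪ B := hunion ▸ heZ
    rcases heAB with heA | heB
    · have : closure ({e} : Set Y) ⊆ E :=
        (closure_minimal (Set.singleton_subset_iff.2 heA) hA).trans hAE
      obtain ⟨w, hw1, hw2⟩ := heQ.2
      exact hw2 (this hw1)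
    · have hBEc : B ⊆ Eᶜ := fun b hb hbE =>
        (Set.eq_empty_iff_forall_notMem.1 hEB b) ⟨hbE, hb⟩
      have : closure ({e} : Set Y) ⊆ Eᶜ :=
        (closure_minimal (Set.singleton_subset_iff.2 heB) hB).trans hBEc
      obtain ⟨w, hw1, hw2⟩ := heQ.1
      exact this hw1 hw2
  -- Find a clopen C ∋ x avoiding Q.
  have hCex : ∃ C : Set Y, (IsClopen C ∧ x ∈ C) ∧ C ∩ Q = ∅ := by
    by_contra hno
    push_neg at hno
    set J := {U : Set Y // IsClopen U ∧ x ∈ U} with hJ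
    haveI : Nonempty J := ⟨⟨Set.univ, isClopen_univ, Set.mem_univ x⟩⟩
    have hdir : Directed (· ≥ ·) (fun U : J => Filter.principal ((U : Set Y) ∩ Q)) := by
      rintro ⟨U, hU⟩ ⟨U', hU'⟩
      refine ⟨⟨U ∩ U', hU.1.inter hU'.1, hU.2, hU'.2⟩, ?_, ?_⟩
      · show Filter.principal _ ≤ Filter.principal _
        rw [le_principal_iff, Filter.mem_principal]
        exact fun y hy => ⟨hy.1.1, hy.2⟩
      · show Filter.principal _ ≤ Filter.principal _
        rw [le_principal_iff, Filter.mem_principal]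
        exact fun y hy => ⟨hy.1.2, hy.2⟩
    haveI : (⨅ U : J, Filter.principal ((U : Set Y) ∩ Q)).NeBot :=
      Filter.iInf_neBot_of_directed' hdir fun U =>
        Filter.principal_neBot_iff.2 (hno U U.2)
    obtain ⟨F, hF⟩ := Ultrafilter.exists_le (⨅ U : J, Filter.principal ((U : Set Y) ∩ Q))
    have hmemF : ∀ U : J, (U : Set Y) ∩ Q ∈ F := fun U =>
      le_principal_iff.1 (hF.trans (iInf_le _ U))
    obtain ⟨z, hz⟩ := exists_patchLim hS F
    have hzZ : z ∈ Z := by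
      rw [hZ]
      refine Set.mem_sInter.2 fun U hU => ?_
      have hUqc : IsCompact U := hU.1.1.isCompact
      exact (hz U hU.1.2 hUqc).2
        (Filter.mem_of_superset (hmemF ⟨U, hU⟩) Set.inter_subset_left)
    have hQF : Q ∈ F :=
      Filter.mem_of_superset (hmemF ⟨Set.univ, isClopen_univ, Set.mem_univ x⟩)
        Set.inter_subset_right
    -- any selection of specializations gives a patch limit in the closure of z
    have main : ∀ g : Y → Y, (∀ e ∈ Q, g e ∈ closure {e}) →
        ∃ w, w ∈ closure {z} ∧ PatchLim (F.map g) w := by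
      intro g hgQ
      obtain ⟨w, hw⟩ := exists_patchLim hS (F.map g)
      refine ⟨w, ?_, hw⟩
      rw [mem_closure_iff]
      intro O hO hwO
      obtain ⟨U, ⟨hUo, hUc⟩, hwU, hUO⟩ := hS.2.2.2.2.mem_nhds_iff.1 (hO.mem_nhds hwO)
      have hUG : U ∈ F.map g := (hw U hUo hUc).1 hwU
      have hint : g ⁻¹' U ∩ Q ∈ F := Filter.inter_mem hUG hQF
      have hsubU : g ⁻¹' U ∩ Q ⊆ U := by
        rintro e ⟨heU, heQ⟩
        by_contra heU'
        have hcl : closure ({e} : Set Y) ⊆ Uᶜ :=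
          closure_minimal (Set.singleton_subset_iff.2 heU') hUo.isClosed_compl
        exact hcl (hgQ e heQ) heU
      have hUF : U ∈ F := Filter.mem_of_superset hint hsubU
      exact ⟨z, hUO ((hz U hUo hUc).2 hUF), rfl⟩
    -- selection into E
    have hzQ : z ∈ Q := by
      constructor
      · set g : Y → Y := fun e => if he : e ∈ Q then he.1.choose else e with hg
        have hgQ : ∀ e ∈ Q, g e ∈ closure {e} ∧ g e ∈ E := by
          intro e he
          have := he.1.choose_spec
          simp only [hg, dif_pos he]
          exact ⟨this.1, this.2⟩
        obtain ⟨w, hwcl, hw⟩ := main g (fun e he => (hgQ e he).1)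
        refine ⟨w, hwcl, ?_⟩
        refine (hw E hEo hEc).2 ?_
        rw [Ultrafilter.mem_map]
        exact Filter.mem_of_superset hQF (fun e he => (hgQ e he).2)
      · set g : Y → Y := fun e => if he : e ∈ Q then he.2.choose else e with hg
        have hgQ : ∀ e ∈ Q, g e ∈ closure {e} ∧ g e ∈ Eᶜ := by
          intro e he
          have := he.2.choose_spec
          simp only [hg, dif_pos he]
          exact ⟨this.1, this.2⟩
        obtain ⟨w, hwcl, hw⟩ := main g (fun e he => (hgQ e he).1)
        refine ⟨w, hwcl, ?_⟩
        intro hwE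
        have hEF : E ∈ F.map g := (hw E hEo hEc).1 hwE
        rw [Ultrafilter.mem_map] at hEF
        have : g ⁻¹' E ∩ Q ∈ F := Filter.inter_mem hEF hQF
        have hempty : g ⁻¹' E ∩ Q = ∅ := by
          rw [Set.eq_empty_iff_forall_notMem]
          rintro e ⟨heE, heQ⟩
          exact (hgQ e heQ).2 heE
        rw [hempty] at this
        exact Filter.empty_notMem (F : Filter Y) this
    exact (Set.eq_empty_iff_forall_notMem.1 hQZ) z ⟨hzQ, hzZ⟩
  obtain ⟨C, ⟨hCclopen, hxC⟩, hCQ⟩ := hCex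
  set D := E ∩ C with hD
  have hDopen : IsOpen D := hEo.inter hCclopen.2
  have hDclosed : IsClosed D := by
    rw [← closure_subset_iff_isClosed]
    intro y hy
    obtain ⟨F, hDF, hFy⟩ := mem_closure_iff_ultrafilter.1 hy
    obtain ⟨k, hk⟩ := exists_patchLim hS F
    have hkE : k ∈ E := (hk E hEo hEc).2 (Filter.mem_of_superset hDF Set.inter_subset_left)
    have hkC : k ∈ C := (hk C hCclopen.2 hCclopen.1.isCompact).2
      (Filter.mem_of_superset hDF Set.inter_subset_right)
    have hkQ : k ∉ Q := fun h =>
      (Set.eq_empty_iff_forall_notMem.1 hCQ) k ⟨hkC, h⟩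
    have hclk : closure ({k} : Set Y) ⊆ E := by
      by_contra h
      apply hkQ
      refine ⟨⟨k, subset_closure rfl, hkE⟩, ?_⟩
      obtain ⟨w, hw1, hw2⟩ := Set.not_subset.1 h
      exact ⟨w, hw1, hw2⟩
    have hycl : y ∈ closure ({k} : Set Y) := by
      rw [mem_closure_iff]
      intro O hO hyO
      obtain ⟨U, ⟨hUo, hUc⟩, hyU, hUO⟩ := hS.2.2.2.2.mem_nhds_iff.1 (hO.mem_nhds hyO)
      have hUF : U ∈ F := hFy (hUo.mem_nhds hyU)
      exact ⟨k, hUO ((hk U hUo hUc).2 hUF), rfl⟩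
    have hyC : y ∈ C := closure_minimal (Set.singleton_subset_iff.2 hkC) hCclopen.1 hycl
    exact ⟨hclk hycl, hyC⟩
  have hZD : Z ⊆ D :=
    Set.sInter_subset_of_mem ⟨⟨hDclosed, hDopen⟩, hAE hxA, hxC⟩
  rw [Set.eq_empty_iff_forall_notMem]
  intro b hb
  have hbZ : b ∈ Z := hunion ▸ Set.mem_union_right A hb
  have hbE : b ∈ E := (hZD hbZ).1
  exact (Set.eq_empty_iff_forall_notMem.1 hEB) b ⟨hbE, hb⟩

end KeyLemma

section Pi0

variable {Y : Type*} [TopologicalSpace Y]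

theorem spectral_connectedComponent_eq_sInter (hS : IsSpectralSpace Y) (x : Y) :
    connectedComponent x = ⋂₀ {U : Set Y | IsClopen U ∧ x ∈ U} := by
  apply Set.Subset.antisymm
  · exact Set.subset_sInter fun U hU => hU.1.connectedComponent_subset hU.2
  · set Z := ⋂₀ {U : Set Y | IsClopen U ∧ x ∈ U} with hZ
    have hZx : x ∈ Z := Set.mem_sInter.2 fun U hU => hU.2
    refine IsPreconnected.subset_connectedComponent ?_ hZx
    rw [isPreconnected_closed_iff]
    intro t t' ht ht' hcov hne hne'
    by_contra hcontra
    rw [Set.not_nonempty_iff_eq_empty] at hcontra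
    have hZclosed : IsClosed Z := isClosed_sInter fun U hU => hU.1.1
    have hAB : (Z ∩ t) ∪ (Z ∩ t') = Z := by
      rw [← Set.inter_union_distrib_left]
      exact Set.inter_eq_self_of_subset_left hcov
    rcases hcov hZx with hxt | hxt'
    · have hBempty : Z ∩ t' = ∅ := by
        refine spectral_aux hS x (hZclosed.inter ht) (hZclosed.inter ht') ?_ ?_ ⟨hZx, hxt⟩
        · rw [Set.eq_empty_iff_forall_notMem]
          rintro y ⟨⟨hy1, hy2⟩, ⟨_, hy3⟩⟩
          exact (Set.eq_empty_iff_forall_notMem.1 hcontra) y ⟨hy1, hy2, hy3⟩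
        · rw [hAB]
      obtain ⟨y, hy⟩ := hne'
      exact (Set.eq_empty_iff_forall_notMem.1 hBempty) y hy
    · have hBempty : Z ∩ t = ∅ := by
        refine spectral_aux hS x (hZclosed.inter ht') (hZclosed.inter ht) ?_ ?_ ⟨hZx, hxt'⟩
        · rw [Set.eq_empty_iff_forall_notMem]
          rintro y ⟨⟨hy1, hy2⟩, ⟨_, hy3⟩⟩
          exact (Set.eq_empty_iff_forall_notMem.1 hcontra) y ⟨hy1, hy3, hy2⟩
        · rw [Set.union_comm, hAB]
      obtain ⟨y, hy⟩ := hne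
      exact (Set.eq_empty_iff_forall_notMem.1 hBempty) y hy

theorem spectral_t2_connectedComponents (hS : IsSpectralSpace Y) :
    T2Space (ConnectedComponents Y) := by
  have hsat : ∀ W : Set Y, IsClopen W →
      ConnectedComponents.mk ⁻¹' (ConnectedComponents.mk '' W) = W := by
    intro W hW
    ext z
    constructor
    · rintro ⟨u, huW, huz⟩
      have h1 : connectedComponent u = connectedComponent z :=
        ConnectedComponents.coe_eq_coe.1 huz
      have hzu : z ∈ connectedComponent u := h1 ▸ mem_connectedComponent
      exact hW.connectedComponent_subset huW hzu
    · exact fun hz => Set.mem_image_of_mem _ hz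
  constructor
  intro a b hab
  obtain ⟨x, rfl⟩ := ConnectedComponents.surjective_coe a
  obtain ⟨y, rfl⟩ := ConnectedComponents.surjective_coe b
  have hxy : y ∉ connectedComponent x := by
    intro h
    exact hab (ConnectedComponents.coe_eq_coe.2 (connectedComponent_eq h))
  rw [spectral_connectedComponent_eq_sInter hS] at hxy
  have : ∃ U : Set Y, (IsClopen U ∧ x ∈ U) ∧ y ∉ U := by
    by_contra hcon
    push_neg at hcon
    exact hxy (Set.mem_sInter.2 fun U hU => hcon U hU)
  obtain ⟨U, hU, hyU⟩ := this
  refine ⟨ConnectedComponents.mk '' U, ConnectedComponents.mk '' Uᶜ, ?_, ?_, ?_, ?_, ?_⟩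
  · rw [← ConnectedComponents.isQuotientMap_coe.isOpen_preimage, hsat U hU.1]
    exact hU.1.2
  · rw [← ConnectedComponents.isQuotientMap_coe.isOpen_preimage, hsat Uᶜ hU.1.compl]
    exact hU.1.1.isOpen_compl
  · exact Set.mem_image_of_mem _ hU.2
  · exact Set.mem_image_of_mem _ hyU
  · rw [Set.disjoint_left]
    rintro c ⟨u, huU, huc⟩ ⟨v, hvU, hvc⟩
    rw [← hvc] at huc
    have h1 : connectedComponent u = connectedComponent v :=
      ConnectedComponents.coe_eq_coe.1 huc
    have hvu : v ∈ connectedComponent u := h1 ▸ mem_connectedComponent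
    exact hvU (hU.1.connectedComponent_subset huU hvu)

end Pi0

section Limit

variable {I : Type*} [PartialOrder I] [IsDirected I (· ≤ ·)] {S : I → Type*}
  [∀ i, TopologicalSpace (S i)]

/-- Bundled hypotheses on the inverse system. -/
structure Sys (p : ∀ {i j : I}, j ≤ i → S i → S j) : Prop where
  pid : ∀ (i : I) (x : S i), p (le_refl i) x = x
  pcomp : ∀ {i j k : I} (hij : j ≤ i) (hjk : k ≤ j) (x : S i),
    p hjk (p hij x) = p (hjk.trans hij) x
  cont : ∀ (i j : I) (h : j ≤ i), Continuous (p h)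
  spec : ∀ i, IsSpectralSpace (S i)
  qc : ∀ (i j : I) (h : j ≤ i) (U : Set (S j)), IsOpen U → IsCompact U →
    IsCompact (p h ⁻¹' U)

variable (p : ∀ {i j : I}, j ≤ i → S i → S j)

/-- The inverse limit as a subspace of the product. -/
abbrev SysLim : Type _ := {x : ∀ i, S i // ∀ (i j : I) (h : j ≤ i), p h (x i) = x j}

variable {p}

theorem sys_pr_continuous (i : I) : Continuous (fun x : SysLim p => x.1 i) :=
  (continuous_apply i).comp continuous_subtype_val

/-- Core construction: every ultrafilter on the limit has a canonical limit point. -/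
theorem sys_core (hp : Sys p) (F : Ultrafilter (SysLim p)) :
    ∃ z : SysLim p, (∀ i, PatchLim (F.map (fun x : SysLim p => x.1 i)) (z.1 i)) ∧
      (F : Filter (SysLim p)) ≤ 𝓝 z := by
  classical
  have hex : ∀ i, ∃ w : S i, PatchLim (F.map (fun x : SysLim p => x.1 i)) w := fun i =>
    exists_patchLim (hp.spec i) _
  choose w hw using hex
  have hcomp : ∀ (i j : I) (h : j ≤ i), p h (w i) = w j := by
    intro i j h
    have h1 : PatchLim ((F.map (fun x : SysLim p => x.1 i)).map (p h)) (p h (w i)) :=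
      patchLim_map (hp.cont i j h) (hp.qc i j h) (hw i)
    have h2 : (F.map (fun x : SysLim p => x.1 i)).map (p h) =
        F.map (fun x : SysLim p => x.1 j) := by
      rw [Ultrafilter.map_map]
      congr 1
      funext x
      exact x.2 i j h
    rw [h2] at h1
    exact patchLim_unique (hp.spec j) h1 (hw j)
  refine ⟨⟨w, hcomp⟩, fun i => hw i, ?_⟩
  have hnhds : 𝓝 (⟨w, hcomp⟩ : SysLim p) = Filter.comap Subtype.val (𝓝 w) :=
    nhds_subtype _ _
  rw [hnhds, ← Filter.map_le_iff_le_comap, nhds_pi, Filter.le_pi]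
  intro i
  have key : Filter.map (Function.eval i) (Filter.map Subtype.val (F : Filter (SysLim p))) =
      (F.map (fun x : SysLim p => x.1 i) : Filter (S i)) := by
    rw [Filter.map_map]
    rfl
  show Filter.map (Function.eval i) (Filter.map Subtype.val (F : Filter (SysLim p))) ≤ 𝓝 (w i)
  rw [key]
  exact patchLim_le_nhds (hp.spec i) (hw i)

theorem sys_compactSpace (hp : Sys p) : CompactSpace (SysLim p) := by
  constructor
  rw [isCompact_iff_ultrafilter_le_nhds]
  intro F _
  obtain ⟨z, _, hz⟩ := sys_core hp F
  exact ⟨z, trivial, hz⟩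

theorem sys_isCompact_pre (hp : Sys p) (i : I) {U : Set (S i)}
    (hUo : IsOpen U) (hUc : IsCompact U) :
    IsCompact ((fun x : SysLim p => x.1 i) ⁻¹' U) := by
  rw [isCompact_iff_ultrafilter_le_nhds]
  intro F hF
  obtain ⟨z, hzlim, hz⟩ := sys_core hp F
  refine ⟨z, ?_, hz⟩
  show z.1 i ∈ U
  refine (hzlim i U hUo hUc).2 ?_
  rw [Ultrafilter.mem_map]
  exact le_principal_iff.1 hF

end Limit

section Limit2

theorem qcopen_finite_iInter {Y : Type*} [TopologicalSpace Y] (hS : IsSpectralSpace Y)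
    {ι : Type*} (s : Finset ι) (U : ι → Set Y)
    (h : ∀ i ∈ s, IsOpen (U i) ∧ IsCompact (U i)) :
    IsOpen (⋂ i ∈ s, U i) ∧ IsCompact (⋂ i ∈ s, U i) := by
  classical
  haveI := hS.1
  induction s using Finset.induction_on with
  | empty =>
    have he : (⋂ i ∈ (∅ : Finset ι), U i) = Set.univ := by simp
    rw [he]
    exact ⟨isOpen_univ, isCompact_univ⟩
  | @insert a s ha ih =>
    rw [Finset.set_biInter_insert]
    have h1 := h a (Finset.mem_insert_self a s)
    have h2 := ih fun i hi => h i (Finset.mem_insert_of_mem hi)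
    exact ⟨h1.1.inter h2.1, hS.2.2.2.1 _ _ h1.1 h1.2 h2.1 h2.2⟩

variable {I : Type*} [PartialOrder I] [IsDirected I (· ≤ ·)] {S : I → Type*}
  [∀ i, TopologicalSpace (S i)] {p : ∀ {i j : I}, j ≤ i → S i → S j}

theorem sys_basis (hp : Sys p) [Nonempty I] :
    TopologicalSpace.IsTopologicalBasis
      {V : Set (SysLim p) | ∃ (i : I) (U : Set (S i)), (IsOpen U ∧ IsCompact U) ∧
        V = (fun x : SysLim p => x.1 i) ⁻¹' U} := by
  classical
  apply TopologicalSpace.isTopologicalBasis_of_isOpen_of_nhds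
  · rintro V ⟨i, U, ⟨hUo, _⟩, rfl⟩
    exact hUo.preimage (sys_pr_continuous i)
  · intro a W haW hWopen
    obtain ⟨W', hW'o, rfl⟩ := isOpen_induced_iff.1 hWopen
    obtain ⟨t, U, hU, hsub⟩ := isOpen_pi_iff.1 hW'o a.1 haW
    have hshrink : ∀ i, i ∈ t → ∃ U' : Set (S i), (IsOpen U' ∧ IsCompact U') ∧
        a.1 i ∈ U' ∧ U' ⊆ U i := by
      intro i hi
      obtain ⟨U', hU', haU', hsubU'⟩ := (hp.spec i).2.2.2.2.mem_nhds_iff.1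
        ((hU i hi).1.mem_nhds (hU i hi).2)
      exact ⟨U', hU', haU', hsubU'⟩
    choose U' hU' haU' hsubU' using hshrink
    obtain ⟨k, hk⟩ := t.exists_le
    set G := ⋂ i ∈ t.attach, p (hk i.1 i.2) ⁻¹' U' i.1 i.2 with hG
    have hGqc : IsOpen G ∧ IsCompact G := by
      refine qcopen_finite_iInter (hp.spec k) t.attach _ fun i _ => ?_
      exact ⟨((hU' i.1 i.2).1).preimage (hp.cont k i.1 (hk i.1 i.2)),
        hp.qc k i.1 (hk i.1 i.2) _ (hU' i.1 i.2).1 (hU' i.1 i.2).2⟩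
    refine ⟨(fun x : SysLim p => x.1 k) ⁻¹' G, ⟨k, G, hGqc, rfl⟩, ?_, ?_⟩
    · show a.1 k ∈ G
      rw [hG]
      refine Set.mem_iInter₂.2 fun i _ => ?_
      show p (hk i.1 i.2) (a.1 k) ∈ U' i.1 i.2
      have h2 : p (hk i.1 i.2) (a.1 k) = a.1 i.1 := a.2 k i.1 (hk i.1 i.2)
      rw [h2]
      exact haU' i.1 i.2
    · intro y hy
      have hyG : y.1 k ∈ G := hy
      show y.1 ∈ W'
      apply hsub
      intro i hi
      have hmem2 : p (hk i hi) (y.1 k) ∈ U' i hi := by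
        have := Set.mem_iInter₂.1 (hG ▸ hyG) ⟨i, hi⟩ (Finset.mem_attach t ⟨i, hi⟩)
        exact this
      have h2 : p (hk i hi) (y.1 k) = y.1 i := y.2 k i (hk i hi)
      rw [h2] at hmem2
      exact hsubU' i hi hmem2

theorem sys_qc_descend (hp : Sys p) [Nonempty I] {W : Set (SysLim p)}
    (hWo : IsOpen W) (hWc : IsCompact W) :
    ∃ (i : I) (U : Set (S i)), IsOpen U ∧ IsCompact U ∧
      W = (fun x : SysLim p => x.1 i) ⁻¹' U := by
  classical
  -- cover W by basic opens contained in W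
  have hcov : ∀ w : W, ∃ (i : I) (U : Set (S i)), (IsOpen U ∧ IsCompact U) ∧
      (w : SysLim p) ∈ (fun x : SysLim p => x.1 i) ⁻¹' U ∧
      (fun x : SysLim p => x.1 i) ⁻¹' U ⊆ W := by
    rintro ⟨w, hw⟩
    obtain ⟨V, ⟨i, U, hU, rfl⟩, hwV, hVW⟩ :=
      (sys_basis hp).exists_subset_of_mem_open hw hWo
    exact ⟨i, U, hU, hwV, hVW⟩
  choose idx U hU hmem hsubW using hcov
  obtain ⟨s, hs⟩ := hWc.elim_finite_subcover
    (fun w : W => (fun x : SysLim p => x.1 (idx w)) ⁻¹' U w)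
    (fun w => (hU w).1.preimage (sys_pr_continuous (idx w)))
    (fun w hw => Set.mem_iUnion.2 ⟨⟨w, hw⟩, hmem ⟨w, hw⟩⟩)
  obtain ⟨m, hm⟩ := (s.image idx).exists_le
  have hmw : ∀ w ∈ s, idx w ≤ m := fun w hw =>
    hm (idx w) (Finset.mem_image_of_mem idx hw)
  set G := ⋃ w ∈ s.attach, p (hmw w.1 w.2) ⁻¹' U w.1 with hG
  have hGo : IsOpen G := isOpen_biUnion fun w _ =>
    ((hU w.1).1).preimage (hp.cont m (idx w.1) (hmw w.1 w.2))
  have hGc : IsCompact G := s.attach.finite_toSet.isCompact_biUnion fun w _ =>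
    hp.qc m (idx w.1) (hmw w.1 w.2) _ (hU w.1).1 (hU w.1).2
  refine ⟨m, G, hGo, hGc, ?_⟩
  ext y
  constructor
  · intro hy
    obtain ⟨w, hws, hyw⟩ : ∃ w ∈ s, y.1 (idx w) ∈ U w := by
      have := hs hy
      simp only [Set.mem_iUnion] at this
      obtain ⟨w, hws, h⟩ := this
      exact ⟨w, hws, h⟩
    show y.1 m ∈ G
    rw [hG]
    refine Set.mem_biUnion (Finset.mem_attach s ⟨w, hws⟩) ?_
    show p (hmw w hws) (y.1 m) ∈ U w
    have h2 : p (hmw w hws) (y.1 m) = y.1 (idx w) := y.2 m (idx w) (hmw w hws)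
    rw [h2]
    exact hyw
  · intro hy
    have hyG : y.1 m ∈ G := hy
    rw [hG] at hyG
    simp only [Set.mem_iUnion] at hyG
    obtain ⟨w, _, hw⟩ := hyG
    have hmem2 : p (hmw w.1 w.2) (y.1 m) ∈ U w.1 := hw
    have h2 : p (hmw w.1 w.2) (y.1 m) = y.1 (idx w.1) := y.2 m (idx w.1) (hmw w.1 w.2)
    rw [h2] at hmem2
    exact hsubW w.1 hmem2

end Limit2

section Limit3

variable {I : Type*} [PartialOrder I] [IsDirected I (· ≤ ·)] {S : I → Type*}
  [∀ i, TopologicalSpace (S i)] {p : ∀ {i j : I}, j ≤ i → S i → S j}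

theorem sys_quasiSober (hp : Sys p) [Nonempty I] : QuasiSober (SysLim p) := by
  constructor
  intro Z hZirr hZcl
  classical
  -- index: basic opens meeting Z
  set J := {V : Set (SysLim p) // (∃ (i : I) (U : Set (S i)), (IsOpen U ∧ IsCompact U) ∧
    V = (fun x : SysLim p => x.1 i) ⁻¹' U) ∧ (V ∩ Z).Nonempty} with hJ
  haveI hJne : Nonempty J := by
    obtain ⟨z0, hz0⟩ := hZirr.1
    obtain ⟨i⟩ := ‹Nonempty I›
    refine ⟨⟨Set.univ, ⟨i, Set.univ, ⟨isOpen_univ, ?_⟩, by simp⟩, ⟨z0, trivial, hz0⟩⟩⟩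
    · haveI := (hp.spec i).1
      exact isCompact_univ
  have hdir : Directed (· ≥ ·) (fun V : J => Filter.principal ((V : Set (SysLim p)) ∩ Z)) := by
    rintro ⟨V, hVb, hVne⟩ ⟨V', hV'b, hV'ne⟩
    have hVo : IsOpen V := by
      obtain ⟨i, U, hU, rfl⟩ := hVb
      exact hU.1.preimage (sys_pr_continuous i)
    have hV'o : IsOpen V' := by
      obtain ⟨i, U, hU, rfl⟩ := hV'b
      exact hU.1.preimage (sys_pr_continuous i)
    obtain ⟨w, hwZ, hwV, hwV'⟩ : ∃ w, w ∈ Z ∧ w ∈ V ∧ w ∈ V' := by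
      obtain ⟨w, hw1, hw2⟩ := hZirr.2 V V' hVo hV'o
        (by obtain ⟨w, h1, h2⟩ := hVne; exact ⟨w, h2, h1⟩)
        (by obtain ⟨w, h1, h2⟩ := hV'ne; exact ⟨w, h2, h1⟩)
      exact ⟨w, hw1, hw2.1, hw2.2⟩
    obtain ⟨B, hBb, hwB, hBsub⟩ := (sys_basis hp).exists_subset_of_mem_open
      (⟨hwV, hwV'⟩ : w ∈ V ∩ V') (hVo.inter hV'o)
    refine ⟨⟨B, hBb, ⟨w, hwB, hwZ⟩⟩, ?_, ?_⟩
    · show Filter.principal _ ≤ Filter.principal _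
      rw [le_principal_iff, Filter.mem_principal]
      exact fun y hy => ⟨(hBsub hy.1).1, hy.2⟩
    · show Filter.principal _ ≤ Filter.principal _
      rw [le_principal_iff, Filter.mem_principal]
      exact fun y hy => ⟨(hBsub hy.1).2, hy.2⟩
  haveI : (⨅ V : J, Filter.principal ((V : Set (SysLim p)) ∩ Z)).NeBot :=
    Filter.iInf_neBot_of_directed' hdir fun V => Filter.principal_neBot_iff.2 V.2.2
  obtain ⟨F, hF⟩ := Ultrafilter.exists_le (⨅ V : J, Filter.principal ((V : Set (SysLim p)) ∩ Z))
  have hmemF : ∀ V : J, (V : Set (SysLim p)) ∩ Z ∈ F := fun V =>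
    le_principal_iff.1 (hF.trans (iInf_le _ V))
  obtain ⟨z, hzlim, hzle⟩ := sys_core hp F
  have hZF : Z ∈ F := by
    obtain ⟨V⟩ := hJne
    exact Filter.mem_of_superset (hmemF V) Set.inter_subset_right
  have hzZ : z ∈ Z := by
    rw [← hZcl.closure_eq]
    exact mem_closure_iff_ultrafilter.2 ⟨F, hZF, hzle⟩
  refine ⟨z, ?_⟩
  apply Set.Subset.antisymm
  · exact closure_minimal (Set.singleton_subset_iff.2 hzZ) hZcl
  · intro w hwZ
    rw [mem_closure_iff]
    intro O hO hwO
    obtain ⟨B, hBb, hwB, hBsub⟩ := (sys_basis hp).exists_subset_of_mem_open hwO hO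
    have hBJ : (B ∩ Z).Nonempty := ⟨w, hwB, hwZ⟩
    have hBF : B ∈ F := Filter.mem_of_superset (hmemF ⟨B, hBb, hBJ⟩) Set.inter_subset_left
    obtain ⟨i, U, hU, rfl⟩ := hBb
    have hzB : z.1 i ∈ U := by
      refine (hzlim i U hU.1 hU.2).2 ?_
      rw [Ultrafilter.mem_map]
      exact hBF
    exact ⟨z, hBsub hzB, rfl⟩

theorem sys_spectral (hp : Sys p) [Nonempty I] : IsSpectralSpace (SysLim p) := by
  haveI : ∀ i, T0Space (S i) := fun i => (hp.spec i).2.1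
  refine ⟨sys_compactSpace hp, inferInstance, sys_quasiSober hp, ?_, ?_⟩
  · intro U V hUo hUc hVo hVc
    obtain ⟨i, U', hU'o, hU'c, rfl⟩ := sys_qc_descend hp hUo hUc
    obtain ⟨j, V', hV'o, hV'c, rfl⟩ := sys_qc_descend hp hVo hVc
    obtain ⟨k, hik, hjk⟩ := directed_of (· ≤ ·) i j
    have heq : (fun x : SysLim p => x.1 i) ⁻¹' U' ∩ (fun x : SysLim p => x.1 j) ⁻¹' V' =
        (fun x : SysLim p => x.1 k) ⁻¹' (p hik ⁻¹' U' ∩ p hjk ⁻¹' V') := by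
      ext y
      have h1 : p hik (y.1 k) = y.1 i := y.2 k i hik
      have h2 : p hjk (y.1 k) = y.1 j := y.2 k j hjk
      simp only [Set.mem_inter_iff, Set.mem_preimage, h1, h2]
    rw [heq]
    refine sys_isCompact_pre hp k ?_ ?_
    · exact (hU'o.preimage (hp.cont k i hik)).inter (hV'o.preimage (hp.cont k j hjk))
    · exact (hp.spec k).2.2.2.1 _ _ (hU'o.preimage (hp.cont k i hik))
        (hp.qc k i hik _ hU'o hU'c) (hV'o.preimage (hp.cont k j hjk))
        (hp.qc k j hjk _ hV'o hV'c)
  · refine TopologicalSpace.isTopologicalBasis_of_isOpen_of_nhds (fun U hU => hU.1) ?_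
    intro a W haW hWo
    obtain ⟨B, hBb, haB, hBsub⟩ := (sys_basis hp).exists_subset_of_mem_open haW hWo
    obtain ⟨i, U, hU, rfl⟩ := hBb
    exact ⟨_, ⟨hU.1.preimage (sys_pr_continuous i), sys_isCompact_pre hp i hU.1 hU.2⟩,
      haB, hBsub⟩

end Limit3

section LimN

variable {I : Type*} [PartialOrder I] [IsDirected I (· ≤ ·)] {S : I → Type*}
  [∀ i, TopologicalSpace (S i)] {p : ∀ {i j : I}, j ≤ i → S i → S j}

/-- Inverse limits of nonempty patch-closed compatible families are nonempty. -/
theorem sys_limN (hp : Sys p) (Z : ∀ i, Set (S i))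
    (hZne : ∀ i, (Z i).Nonempty) (hZupc : ∀ i, UPC (Z i))
    (hZcomp : ∀ (i j : I) (h : j ≤ i), p h '' Z i ⊆ Z j) :
    ∃ x : SysLim p, ∀ i, x.1 i ∈ Z i := by
  classical
  -- encode families of subsets as subsets of the sigma type
  let σ := Σ i, S i
  let sl : Set σ → ∀ i, Set (S i) := fun E i => {x | (⟨i, x⟩ : σ) ∈ E}
  let en : (∀ i, Set (S i)) → Set σ := fun W => {t | t.2 ∈ W t.1}
  have hslen : ∀ W, sl (en W) = W := fun W => rfl
  have hensl : ∀ E, en (sl E) = E := by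
    intro E
    ext ⟨i, x⟩
    rfl
  have hmono : ∀ V W : ∀ i, Set (S i), (∀ i, V i ⊆ W i) → en V ⊆ en W := by
    intro V W h ⟨i, x⟩ hx
    exact h i hx
  set Good : Set (Set σ) := {E | (∀ i, (sl E i).Nonempty) ∧ (∀ i, UPC (sl E i)) ∧
    (∀ (i j : I) (h : j ≤ i), p h '' sl E i ⊆ sl E j) ∧ (∀ i, sl E i ⊆ Z i)} with hGood
  have hZGood : en Z ∈ Good := ⟨hZne, hZupc, hZcomp, fun i => Set.Subset.rfl⟩
  have hchain : ∀ c ⊆ Good, IsChain (· ⊆ ·) c → c.Nonempty →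
      ∃ lb ∈ Good, ∀ s ∈ c, lb ⊆ s := by
    intro c hcG hc hcne
    haveI : Nonempty c := hcne.to_subtype
    refine ⟨⋂₀ c, ⟨?_, ?_, ?_, ?_⟩, fun s hs => Set.sInter_subset_of_mem hs⟩
    · -- nonempty slices
      intro i
      have hslice : sl (⋂₀ c) i = ⋂ E : c, sl (E : Set σ) i := by
        ext x
        simp only [Set.mem_sInter, Set.mem_iInter, Subtype.forall]
        rfl
      rw [hslice]
      refine nonempty_iInter_upc (hp.spec i) (fun E => (hcG E.2).2.1 i)
        (fun E => (hcG E.2).1 i) ?_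
      rintro E E'
      rcases hc.total E.2 E'.2 with h | h
      · exact ⟨E, Set.Subset.rfl, fun x hx => h hx⟩
      · exact ⟨E', fun x hx => h hx, Set.Subset.rfl⟩
    · intro i
      have hslice : sl (⋂₀ c) i = ⋂ E : c, sl (E : Set σ) i := by
        ext x
        simp only [Set.mem_sInter, Set.mem_iInter, Subtype.forall]
        rfl
      rw [hslice]
      exact upc_iInter fun E => (hcG E.2).2.1 i
    · intro i j h x hx
      obtain ⟨w, hw, rfl⟩ := hx
      intro E hE
      exact (hcG hE).2.2.1 i j h ⟨w, hw E hE, rfl⟩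
    · intro i x hx
      obtain ⟨E, hE⟩ := hcne
      exact (hcG hE).2.2.2 i (hx E hE)
  obtain ⟨m, _, hm⟩ := zorn_superset_nonempty Good hchain (en Z) hZGood
  set W : ∀ i, Set (S i) := sl m with hW
  have hWG : (∀ i, (W i).Nonempty) ∧ (∀ i, UPC (W i)) ∧
      (∀ (i j : I) (h : j ≤ i), p h '' W i ⊆ W j) ∧ (∀ i, W i ⊆ Z i) := hm.prop
  obtain ⟨hWne, hWupc, hWcomp, hWZ⟩ := hWG
  -- minimality in terms of families
  have hmin : ∀ V : ∀ i, Set (S i),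
      ((∀ i, (V i).Nonempty) ∧ (∀ i, UPC (V i)) ∧
        (∀ (i j : I) (h : j ≤ i), p h '' V i ⊆ V j)) →
      (∀ i, V i ⊆ W i) → ∀ i, V i = W i := by
    intro V hV hVW i
    have hVZ : ∀ i, V i ⊆ Z i := fun i => (hVW i).trans (hWZ i)
    have hVGood : en V ∈ Good := ⟨hV.1, hV.2.1, hV.2.2, hVZ⟩
    have hsub : en V ⊆ m := by
      rw [← hensl m]
      exact hmono _ _ hVW
    have : m ⊆ en V := hm.2 hVGood hsub
    exact Set.Subset.antisymm (hVW i) (fun x hx => this hx)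
  -- Claim 1: surjectivity of the restricted system
  have hsurjW : ∀ (j i : I) (h : j ≤ i), W j ⊆ p h '' W i := by
    have key : ∀ j : I, (⋂ i : {i // j ≤ i}, p i.2 '' W i.1) = W j := by
      intro j
      set V : ∀ j : I, Set (S j) := fun j => ⋂ i : {i // j ≤ i}, p i.2 '' W i.1 with hV
      have hVsubW : ∀ j, V j ⊆ W j := by
        intro j x hx
        have hx' := Set.mem_iInter.1 hx ⟨j, le_refl j⟩
        obtain ⟨w, hw, rfl⟩ := hx'
        rw [hp.pid j w]
        exact hw
      have hVdir : ∀ j : I, Directed (fun A B : Set (S j) => B ⊆ A)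
          (fun i : {i // j ≤ i} => p i.2 '' W i.1) := by
        rintro j ⟨i₁, h₁⟩ ⟨i₂, h₂⟩
        obtain ⟨k, hk₁, hk₂⟩ := directed_of (· ≤ ·) i₁ i₂
        refine ⟨⟨k, h₁.trans hk₁⟩, ?_, ?_⟩
        · rintro x ⟨w, hw, rfl⟩
          refine ⟨p hk₁ w, hWcomp k i₁ hk₁ ⟨w, hw, rfl⟩, ?_⟩
          rw [hp.pcomp hk₁ h₁ w]
        · rintro x ⟨w, hw, rfl⟩
          refine ⟨p hk₂ w, hWcomp k i₂ hk₂ ⟨w, hw, rfl⟩, ?_⟩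
          rw [hp.pcomp hk₂ h₂ w]
      have hVne : ∀ j, (V j).Nonempty := by
        intro j
        haveI : Nonempty {i // j ≤ i} := ⟨⟨j, le_refl j⟩⟩
        exact nonempty_iInter_upc (hp.spec j)
          (fun i => upc_image (hp.spec i.1) (hp.spec j) (hp.cont i.1 j i.2)
            (hp.qc i.1 j i.2) (hWupc i.1))
          (fun i => (hWne i.1).image _) (hVdir j)
      have hVupc : ∀ j, UPC (V j) := fun j =>
        upc_iInter fun i => upc_image (hp.spec i.1) (hp.spec j) (hp.cont i.1 j i.2)
          (hp.qc i.1 j i.2) (hWupc i.1)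
      have hVcomp : ∀ (j k : I) (h : k ≤ j), p h '' V j ⊆ V k := by
        rintro j k h x ⟨w, hw, rfl⟩
        refine Set.mem_iInter.2 ?_
        rintro ⟨i, hki⟩
        obtain ⟨n, hn₁, hn₂⟩ := directed_of (· ≤ ·) i j
        have hw' := Set.mem_iInter.1 hw ⟨n, hn₂⟩
        obtain ⟨u, hu, hu'⟩ := hw'
        refine ⟨p hn₁ u, hWcomp n i hn₁ ⟨u, hu, rfl⟩, ?_⟩
        rw [hp.pcomp hn₁ hki u, ← hu', hp.pcomp hn₂ h u]
      exact hmin V ⟨hVne, hVupc, hVcomp⟩ hVsubW j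
    intro j i h x hx
    rw [← key j] at hx
    exact Set.mem_iInter.1 hx ⟨i, h⟩
  -- Claim 2: each W j is a singleton w.r.t. quasi-compact opens
  have hsingle : ∀ (j : I) (u v : S j), u ∈ W j → v ∈ W j →
      ∀ U : Set (S j), IsOpen U → IsCompact U → u ∈ U → v ∈ U := by
    intro j u v hu hv U hUo hUc huU
    set V : ∀ k : I, Set (S k) := fun k =>
      ⋂ i : {i // j ≤ i ∧ k ≤ i}, p i.2.2 '' (W i.1 ∩ p i.2.1 ⁻¹' U) with hV
    have hterm_upc : ∀ (k : I) (i : {i // j ≤ i ∧ k ≤ i}),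
        UPC (p i.2.2 '' (W i.1 ∩ p i.2.1 ⁻¹' U)) := by
      intro k i
      refine upc_image (hp.spec i.1) (hp.spec k) (hp.cont i.1 k i.2.2) (hp.qc i.1 k i.2.2) ?_
      exact upc_inter (hWupc i.1)
        (upc_qcopen (hUo.preimage (hp.cont i.1 j i.2.1)) (hp.qc i.1 j i.2.1 U hUo hUc))
    have hterm_ne : ∀ (k : I) (i : {i // j ≤ i ∧ k ≤ i}),
        (p i.2.2 '' (W i.1 ∩ p i.2.1 ⁻¹' U)).Nonempty := by
      intro k i
      obtain ⟨w, hw, hwu⟩ := hsurjW j i.1 i.2.1 hu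
      exact ⟨p i.2.2 w, ⟨w, ⟨hw, by rw [Set.mem_preimage, hwu]; exact huU⟩, rfl⟩⟩
    have hVdir : ∀ k : I, Directed (fun A B : Set (S k) => B ⊆ A)
        (fun i : {i // j ≤ i ∧ k ≤ i} => p i.2.2 '' (W i.1 ∩ p i.2.1 ⁻¹' U)) := by
      rintro k ⟨i₁, hj₁, hk₁⟩ ⟨i₂, hj₂, hk₂⟩
      obtain ⟨n, hn₁, hn₂⟩ := directed_of (· ≤ ·) i₁ i₂
      refine ⟨⟨n, hj₁.trans hn₁, hk₁.trans hn₁⟩, ?_, ?_⟩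
      · rintro x ⟨w, ⟨hw, hwU⟩, rfl⟩
        refine ⟨p hn₁ w, ⟨hWcomp n i₁ hn₁ ⟨w, hw, rfl⟩, ?_⟩, ?_⟩
        · rw [Set.mem_preimage, hp.pcomp hn₁ hj₁ w]
          exact hwU
        · rw [hp.pcomp hn₁ hk₁ w]
      · rintro x ⟨w, ⟨hw, hwU⟩, rfl⟩
        refine ⟨p hn₂ w, ⟨hWcomp n i₂ hn₂ ⟨w, hw, rfl⟩, ?_⟩, ?_⟩
        · rw [Set.mem_preimage, hp.pcomp hn₂ hj₂ w]
          exact hwU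
        · rw [hp.pcomp hn₂ hk₂ w]
    have hVne : ∀ k, (V k).Nonempty := by
      intro k
      obtain ⟨n, hn₁, hn₂⟩ := directed_of (· ≤ ·) j k
      haveI : Nonempty {i // j ≤ i ∧ k ≤ i} := ⟨⟨n, hn₁, hn₂⟩⟩
      exact nonempty_iInter_upc (hp.spec k) (hterm_upc k) (hterm_ne k) (hVdir k)
    have hVupc : ∀ k, UPC (V k) := fun k => upc_iInter (hterm_upc k)
    have hVsubW : ∀ k, V k ⊆ W k := by
      intro k x hx
      obtain ⟨n, hn₁, hn₂⟩ := directed_of (· ≤ ·) j k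
      have hx' := Set.mem_iInter.1 hx ⟨n, hn₁, hn₂⟩
      obtain ⟨w, ⟨hw, _⟩, rfl⟩ := hx'
      exact hWcomp n k hn₂ ⟨w, hw, rfl⟩
    have hVcomp : ∀ (k l : I) (h : l ≤ k), p h '' V k ⊆ V l := by
      rintro k l h x ⟨w, hw, rfl⟩
      refine Set.mem_iInter.2 ?_
      rintro ⟨i, hji, hli⟩
      obtain ⟨n, hn₁, hn₂⟩ := directed_of (· ≤ ·) i k
      have hjn : j ≤ n := hji.trans hn₁
      have hw' := Set.mem_iInter.1 hw ⟨n, hjn, hn₂⟩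
      obtain ⟨u, ⟨hu, huU'⟩, hu'⟩ := hw'
      refine ⟨p hn₁ u, ⟨hWcomp n i hn₁ ⟨u, hu, rfl⟩, ?_⟩, ?_⟩
      · rw [Set.mem_preimage, hp.pcomp hn₁ hji u]
        exact huU'
      · rw [hp.pcomp hn₁ hli u, ← hu', hp.pcomp hn₂ h u]
    have hVW : ∀ k, V k = W k := hmin V ⟨hVne, hVupc, hVcomp⟩ hVsubW
    have hvV : v ∈ V j := (hVW j) ▸ hv
    have := Set.mem_iInter.1 hvV ⟨j, le_refl j, le_refl j⟩
    obtain ⟨w, ⟨_, hwU⟩, hw'⟩ := this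
    rw [Set.mem_preimage, hp.pid j w] at hwU
    rw [hp.pid j w] at hw'
    rw [← hw']
    exact hwU
  have huniq : ∀ (j : I) (u v : S j), u ∈ W j → v ∈ W j → u = v := by
    intro j u v hu hv
    apply eq_of_same_qcopens (hp.spec j)
    intro U hUo hUc
    exact ⟨fun h => hsingle j u v hu hv U hUo hUc h,
           fun h => hsingle j v u hv hu U hUo hUc h⟩
  have hxsel : ∀ i, (W i).Nonempty := hWne
  refine ⟨⟨fun i => (hxsel i).choose, ?_⟩, fun i => hWZ i (hxsel i).choose_spec⟩
  intro i j h
  have h1 : p h ((hxsel i).choose) ∈ W j :=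
    hWcomp i j h ⟨(hxsel i).choose, (hxsel i).choose_spec, rfl⟩
  exact huniq j _ _ h1 (hxsel j).choose_spec

end LimN

section PrSurj

variable {I : Type*} [PartialOrder I] [IsDirected I (· ≤ ·)] {S : I → Type*}
  [∀ i, TopologicalSpace (S i)] {p : ∀ {i j : I}, j ≤ i → S i → S j}

theorem sys_pr_surj (hp : Sys p)
    (hsurj : ∀ (i j : I) (h : j ≤ i), Function.Surjective (p h))
    (n : I) (s : S n) : ∃ x : SysLim p, x.1 n = s := by
  classical
  set Z : ∀ k : I, Set (S k) := fun k =>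
    ⋂ i : {i // n ≤ i ∧ k ≤ i}, p i.2.2 '' (p i.2.1 ⁻¹' {s}) with hZ
  have hterm_upc : ∀ (k : I) (i : {i // n ≤ i ∧ k ≤ i}),
      UPC (p i.2.2 '' (p i.2.1 ⁻¹' {s})) := fun k i =>
    upc_image (hp.spec i.1) (hp.spec k) (hp.cont i.1 k i.2.2) (hp.qc i.1 k i.2.2)
      (upc_fiber (hp.spec n) (hp.cont i.1 n i.2.1) (hp.qc i.1 n i.2.1) s)
  have hterm_ne : ∀ (k : I) (i : {i // n ≤ i ∧ k ≤ i}),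
      (p i.2.2 '' (p i.2.1 ⁻¹' {s})).Nonempty := by
    intro k i
    obtain ⟨w, hw⟩ := hsurj i.1 n i.2.1 s
    exact ⟨p i.2.2 w, ⟨w, by rw [Set.mem_preimage, hw]; rfl, rfl⟩⟩
  have hZdir : ∀ k : I, Directed (fun A B : Set (S k) => B ⊆ A)
      (fun i : {i // n ≤ i ∧ k ≤ i} => p i.2.2 '' (p i.2.1 ⁻¹' {s})) := by
    rintro k ⟨i₁, hn₁, hk₁⟩ ⟨i₂, hn₂, hk₂⟩
    obtain ⟨m, hm₁, hm₂⟩ := directed_of (· ≤ ·) i₁ i₂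
    refine ⟨⟨m, hn₁.trans hm₁, hk₁.trans hm₁⟩, ?_, ?_⟩
    · rintro x ⟨w, hw, rfl⟩
      refine ⟨p hm₁ w, ?_, ?_⟩
      · rw [Set.mem_preimage, hp.pcomp hm₁ hn₁ w]
        exact hw
      · rw [hp.pcomp hm₁ hk₁ w]
    · rintro x ⟨w, hw, rfl⟩
      refine ⟨p hm₂ w, ?_, ?_⟩
      · rw [Set.mem_preimage, hp.pcomp hm₂ hn₂ w]
        exact hw
      · rw [hp.pcomp hm₂ hk₂ w]
  have hZne : ∀ k, (Z k).Nonempty := by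
    intro k
    obtain ⟨m, hm₁, hm₂⟩ := directed_of (· ≤ ·) n k
    haveI : Nonempty {i // n ≤ i ∧ k ≤ i} := ⟨⟨m, hm₁, hm₂⟩⟩
    exact nonempty_iInter_upc (hp.spec k) (hterm_upc k) (hterm_ne k) (hZdir k)
  have hZupc : ∀ k, UPC (Z k) := fun k => upc_iInter (hterm_upc k)
  have hZcomp : ∀ (k l : I) (h : l ≤ k), p h '' Z k ⊆ Z l := by
    rintro k l h x ⟨w, hw, rfl⟩
    refine Set.mem_iInter.2 ?_
    rintro ⟨i, hni, hli⟩
    obtain ⟨m, hm₁, hm₂⟩ := directed_of (· ≤ ·) i k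
    have hnm : n ≤ m := hni.trans hm₁
    have hw' := Set.mem_iInter.1 hw ⟨m, hnm, hm₂⟩
    obtain ⟨u, hu, hu'⟩ := hw'
    refine ⟨p hm₁ u, ?_, ?_⟩
    · rw [Set.mem_preimage, hp.pcomp hm₁ hni u]
      exact hu
    · rw [hp.pcomp hm₁ hli u, ← hu', hp.pcomp hm₂ h u]
  obtain ⟨x, hx⟩ := sys_limN hp Z hZne hZupc hZcomp
  refine ⟨x, ?_⟩
  have := Set.mem_iInter.1 (hx n) ⟨n, le_refl n, le_refl n⟩
  obtain ⟨w, hw, hw'⟩ := this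
  rw [Set.mem_preimage, hp.pid n w] at hw
  rw [hp.pid n w] at hw'
  rw [← hw']
  exact hw

end PrSurj

/-- Let `{S i}` be an inverse system of spectral spaces over a directed
partially ordered set, with quasi-compact surjective continuous transition maps `p`, and
let `S = lim_i S i`.  Let `q` denote the family of maps `π₀(S i) → π₀(S j)` induced by the
transition maps.  Then the natural continuous map `π₀(S) → lim_i π₀(S i)`, whose `i`-th
component is induced by the projection `pr_i : S → S i` (the target being the inverse
limit of the `π₀(S i)`, topologized as a subspace of the product), is a homeomorphism. -/
theorem stmt_8 {I : Type*} [PartialOrder I] [IsDirected I (· ≤ ·)]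
    (S : I → Type*) [∀ i, TopologicalSpace (S i)]
    (p : ∀ {i j : I}, j ≤ i → S i → S j)
    (hp_id : ∀ (i : I) (x : S i), p (le_refl i) x = x)
    (hp_comp : ∀ {i j k : I} (hij : j ≤ i) (hjk : k ≤ j) (x : S i),
      p hjk (p hij x) = p (hjk.trans hij) x)
    (hcont : ∀ (i j : I) (h : j ≤ i), Continuous (p h))
    (hspectral : ∀ i : I, IsSpectralSpace (S i))
    (hqc : ∀ (i j : I) (h : j ≤ i) (U : Set (S j)), IsOpen U → IsCompact U →
      IsCompact (p h ⁻¹' U))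
    (hsurj : ∀ (i j : I) (h : j ≤ i), Function.Surjective (p h))
    -- the maps `π₀(S i) → π₀(S j)` induced by the transition maps
    (q : ∀ {i j : I}, j ≤ i → ConnectedComponents (S i) → ConnectedComponents (S j))
    (hq_cont : ∀ (i j : I) (h : j ≤ i), Continuous (q h))
    (hq : ∀ (i j : I) (h : j ≤ i) (x : S i),
      q h (ConnectedComponents.mk x) = ConnectedComponents.mk (p h x)) :
    ∃ Φ : ConnectedComponents
        {x : ∀ i, S i // ∀ (i j : I) (h : j ≤ i), p h (x i) = x j} ≃ₜ
        {c : ∀ i, ConnectedComponents (S i) // ∀ (i j : I) (h : j ≤ i), q h (c i) = c j},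
      ∀ x : {x : ∀ i, S i // ∀ (i j : I) (h : j ≤ i), p h (x i) = x j},
        (Φ (ConnectedComponents.mk x)).1 = fun i => ConnectedComponents.mk (x.1 i) := by
  classical
  have hp : Sys (S := S) (fun {i j} => p) := ⟨hp_id, hp_comp, hcont, hspectral, hqc⟩
  haveI hT2i : ∀ i, T2Space (ConnectedComponents (S i)) :=
    fun i => spectral_t2_connectedComponents (hspectral i)
  haveI : CompactSpace (SysLim (fun {i j} => p)) := sys_compactSpace hp
  haveI : CompactSpace (ConnectedComponents (SysLim (fun {i j} => p))) :=
    inferInstanceAs (CompactSpace (Quotient _))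
  -- the comparison map
  have hcompat : ∀ (x : SysLim (fun {i j} => p)) (i j : I) (h : j ≤ i),
      q h (ConnectedComponents.mk (x.1 i)) = ConnectedComponents.mk (x.1 j) := by
    intro x i j h
    have h2 : p h (x.1 i) = x.1 j := x.2 i j h
    rw [hq i j h (x.1 i), h2]
  set φ : SysLim (fun {i j} => p) →
      {c : ∀ i, ConnectedComponents (S i) // ∀ (i j : I) (h : j ≤ i), q h (c i) = c j} :=
    fun x => ⟨fun i => ConnectedComponents.mk (x.1 i), hcompat x⟩ with hφ
  have hφc : Continuous φ := by
    refine Continuous.subtype_mk ?_ _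
    exact continuous_pi fun i =>
      ConnectedComponents.continuous_coe.comp ((continuous_apply i).comp continuous_subtype_val)
  have hΦinj : Function.Injective hφc.connectedComponentsLift := by
    intro a b hab
    obtain ⟨x, rfl⟩ := ConnectedComponents.surjective_coe a
    obtain ⟨y, rfl⟩ := ConnectedComponents.surjective_coe b
    rw [hφc.connectedComponentsLift_apply_coe, hφc.connectedComponentsLift_apply_coe] at hab
    have hxy : ∀ i, ConnectedComponents.mk (x.1 i) = ConnectedComponents.mk (y.1 i) :=
      fun i => congrArg (fun c => c.1 i) hab
    rcases isEmpty_or_nonempty I with hI | hI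
    · have hxy2 : x = y := Subtype.ext (funext fun i => isEmptyElim i)
      rw [hxy2]
    · have hXspec := sys_spectral hp
      apply ConnectedComponents.coe_eq_coe.2
      have hyq : y ∈ ⋂₀ {U : Set (SysLim (fun {i j} => p)) | IsClopen U ∧ x ∈ U} := by
        refine Set.mem_sInter.2 fun U hU => ?_
        obtain ⟨iU, UU, hUUo, hUUc, hUeq⟩ := sys_qc_descend hp hU.1.2 hU.1.1.isCompact
        obtain ⟨iV, VV, hVVo, hVVc, hVeq⟩ := sys_qc_descend hp hU.1.1.isOpen_compl
          hU.1.2.isClosed_compl.isCompact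
        obtain ⟨k, hik, hjk⟩ := directed_of (· ≤ ·) iU iV
        set UU' : Set (S k) := p hik ⁻¹' UU with hUU'
        set VV' : Set (S k) := p hjk ⁻¹' VV with hVV'
        have hUeq' : U = (fun x : SysLim (fun {i j} => p) => x.1 k) ⁻¹' UU' := by
          rw [hUeq]
          ext z
          show z.1 iU ∈ UU ↔ p hik (z.1 k) ∈ UU
          have h2 : p hik (z.1 k) = z.1 iU := z.2 k iU hik
          rw [h2]
        have hVeq' : Uᶜ = (fun x : SysLim (fun {i j} => p) => x.1 k) ⁻¹' VV' := by
          rw [hVeq]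
          ext z
          show z.1 iV ∈ VV ↔ p hjk (z.1 k) ∈ VV
          have h2 : p hjk (z.1 k) = z.1 iV := z.2 k iV hjk
          rw [h2]
        have hcompl : VV' = UU'ᶜ := by
          ext s
          obtain ⟨x0, hx0⟩ := sys_pr_surj hp hsurj k s
          constructor
          · intro hs hsU
            have h1 : x0 ∈ Uᶜ := by rw [hVeq']; show x0.1 k ∈ VV'; rw [hx0]; exact hs
            have h2 : x0 ∈ U := by rw [hUeq']; show x0.1 k ∈ UU'; rw [hx0]; exact hsU
            exact h1 h2
          · intro hs
            by_contra hsV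
            have h1 : x0 ∉ Uᶜ := by
              rw [hVeq']
              show ¬ x0.1 k ∈ VV'
              rw [hx0]
              exact hsV
            have h2 : x0 ∉ U := by
              rw [hUeq']
              show ¬ x0.1 k ∈ UU'
              rw [hx0]
              exact hs
            exact h1 fun hU2 => h2 hU2
        have hUU'open : IsOpen UU' := hUUo.preimage (hcont k iU hik)
        have hUU'closed : IsClosed UU' := by
          rw [← isOpen_compl_iff, ← hcompl]
          exact hVVo.preimage (hcont k iV hjk)
        have hxk : x.1 k ∈ UU' := by
          have hx2 : x ∈ U := hU.2
          rw [hUeq'] at hx2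
          exact hx2
        have h2 : connectedComponent (x.1 k) = connectedComponent (y.1 k) :=
          ConnectedComponents.coe_eq_coe.1 (hxy k)
        have hyk : y.1 k ∈ connectedComponent (x.1 k) := h2.symm ▸ mem_connectedComponent
        have : y.1 k ∈ UU' :=
          IsClopen.connectedComponent_subset ⟨hUU'closed, hUU'open⟩ hxk hyk
        rw [hUeq']
        exact this
      rw [← spectral_connectedComponent_eq_sInter hXspec x] at hyq
      exact connectedComponent_eq hyq
  have hΦsurj : Function.Surjective hφc.connectedComponentsLift := by
    intro c
    have hZne : ∀ i, (ConnectedComponents.mk ⁻¹' {c.1 i} : Set (S i)).Nonempty := by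
      intro i
      obtain ⟨w, hw⟩ := ConnectedComponents.surjective_coe (c.1 i)
      exact ⟨w, by simp [hw]⟩
    have hZclosed : ∀ i, IsClosed (ConnectedComponents.mk ⁻¹' {c.1 i} : Set (S i)) :=
      fun i => (isClosed_singleton).preimage ConnectedComponents.continuous_coe
    have hZupc : ∀ i, UPC (ConnectedComponents.mk ⁻¹' {c.1 i} : Set (S i)) :=
      fun i => (hZclosed i).upc (hspectral i)
    have hZcomp : ∀ (i j : I) (h : j ≤ i),
        p h '' (ConnectedComponents.mk ⁻¹' {c.1 i}) ⊆ (ConnectedComponents.mk ⁻¹' {c.1 j}) := by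
      rintro i j h x ⟨w, hw, rfl⟩
      show ConnectedComponents.mk (p h w) ∈ ({c.1 j} : Set (ConnectedComponents (S j)))
      rw [← hq i j h w]
      have hw2 : ConnectedComponents.mk w = c.1 i := hw
      have hc2 : q h (c.1 i) = c.1 j := c.2 i j h
      rw [hw2, hc2]
      rfl
    obtain ⟨x, hx⟩ := sys_limN hp (fun i => ConnectedComponents.mk ⁻¹' {c.1 i})
      hZne hZupc hZcomp
    refine ⟨ConnectedComponents.mk x, ?_⟩
    rw [hφc.connectedComponentsLift_apply_coe]
    apply Subtype.ext
    funext i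
    exact hx i
  let e := Equiv.ofBijective _ ⟨hΦinj, hΦsurj⟩
  have hec : Continuous e := hφc.connectedComponentsLift_continuous
  refine ⟨Continuous.homeoOfEquivCompactToT2 (f := e) hec, ?_⟩
  intro x
  rfl
end
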